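/- arXiv:0810.3603 — 8 statements merged into one kernel-verified Lean document; each statement's English description precedes it below -/
import Mathlib

section
/- Let p be a prime and G = ⟨σ⟩ a cyclic group of order p^m. Define the class function δ on G by δ(σ^a) = -p^(i+1)/(p-1) for a ≢ 0 mod p^m where i = ord_p(a), and δ(1) = m·p^m. Then for an irreducible character χ of G of order p^n with n > 0, the inner product ⟨χ, δ⟩ equals (np - n + 1)/(p-1), and ⟨1_G, δ⟩ = 0. -/
open Finset

/-- The class function `δ_G^mult` on the cyclic group `ZMod (p^m)` (written
multiplicatively): `δ(σ^a) = -p^(i+1)/(p-1)` for `a ≢ 0 mod p^m`, where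
`i = ord_p a`, and `δ(1) = m·p^m`. -/
noncomputable def deltaMult (p m : ℕ) : Multiplicative (ZMod (p ^ m)) → ℂ :=
  fun a =>
    if (Multiplicative.toAdd a) = 0 then (m : ℂ) * (p : ℂ) ^ m
    else -((p : ℂ) ^ (padicValNat p (Multiplicative.toAdd a).val + 1)) / ((p : ℂ) - 1)

/-- Inner product of class functions on a finite group. -/
noncomputable def innerCF {G : Type*} [Group G] [Fintype G] (χ₁ χ₂ : G → ℂ) : ℂ :=
  (Fintype.card G : ℂ)⁻¹ * ∑ g : G, (starRingEnd ℂ) (χ₁ g) * χ₂ g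

namespace Stmt0Aux

/-- `deltaMult` as a function of a natural number representative. -/
noncomputable def d (p m : ℕ) : ℕ → ℂ := fun a =>
  if a = 0 then (m : ℂ) * (p : ℂ) ^ m
  else -((p : ℂ) ^ (padicValNat p a + 1)) / ((p : ℂ) - 1)

lemma sum_pow_eq (ξ : ℂ) (K : ℕ) (h : ξ ^ K = 1) :
    ∑ a ∈ range K, ξ ^ a = if ξ = 1 then (K : ℂ) else 0 := by
  split_ifs with h1
  · simp [h1]
  · rw [geom_sum_eq h1, h]; simp

lemma filter_dvd_sum (ξ : ℂ) (p j m : ℕ) (hp : 0 < p) (hj : j ≤ m) :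
    ∑ a ∈ (range (p ^ m)).filter (fun a => p ^ j ∣ a), ξ ^ a
      = ∑ c ∈ range (p ^ (m - j)), (ξ ^ p ^ j) ^ c := by
  have hpj : 0 < p ^ j := pow_pos hp j
  have hmm : p ^ (m - j) * p ^ j = p ^ m := by
    rw [← pow_add, Nat.sub_add_cancel hj]
  refine Finset.sum_nbij' (fun a => a / p ^ j) (fun c => p ^ j * c) ?_ ?_ ?_ ?_ ?_
  · intro a ha
    simp only [mem_filter, mem_range] at ha
    simp only [mem_range]
    rw [Nat.div_lt_iff_lt_mul hpj, hmm]
    exact ha.1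
  · intro c hc
    simp only [mem_range] at hc
    simp only [mem_filter, mem_range]
    constructor
    · calc p ^ j * c < p ^ j * p ^ (m - j) := by
            exact (Nat.mul_lt_mul_left hpj).mpr hc
        _ = p ^ m := by rw [mul_comm]; exact hmm
    · exact Dvd.intro c rfl
  · intro a ha
    simp only [mem_filter, mem_range] at ha
    exact Nat.mul_div_cancel' ha.2
  · intro c _
    exact Nat.mul_div_cancel_left c hpj
  · intro a ha
    simp only [mem_filter, mem_range] at ha
    rw [← pow_mul, Nat.mul_div_cancel' ha.2]

lemma d_decomp (p m : ℕ) (hp : p.Prime) (a : ℕ) (h1 : a ≠ 0) (h2 : a < p ^ m) :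
    d p m a = -1 / ((p : ℂ) - 1)
      - ∑ j ∈ range m, (p : ℂ) ^ j * (if p ^ j ∣ a then 1 else 0) := by
  haveI : Fact p.Prime := ⟨hp⟩
  have hp1 : (p : ℂ) ≠ 1 := by
    exact_mod_cast fun h => hp.one_lt.ne' (Nat.cast_injective h)
  have hpne : (p : ℂ) - 1 ≠ 0 := sub_ne_zero.mpr hp1
  set v := padicValNat p a with hv
  have hvlt : v < m := by
    have hdvd : p ^ v ∣ a := pow_padicValNat_dvd
    have : p ^ v < p ^ m := lt_of_le_of_lt (Nat.le_of_dvd (Nat.pos_of_ne_zero h1) hdvd) h2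
    exact (pow_lt_pow_iff_right₀ hp.one_lt).mp this
  have hcond : ∀ j, p ^ j ∣ a ↔ j ≤ v := fun j => padicValNat_dvd_iff_le h1
  classical
  have e1 : ∀ j ∈ range m, (p : ℂ) ^ j * (if p ^ j ∣ a then 1 else 0)
      = if j ≤ v then (p : ℂ) ^ j else 0 := by
    intro j _
    by_cases h : j ≤ v
    · rw [if_pos ((hcond j).mpr h), if_pos h, mul_one]
    · rw [if_neg (fun hd => h ((hcond j).mp hd)), if_neg h, mul_zero]
  have hsum : ∑ j ∈ range m, (p : ℂ) ^ j * (if p ^ j ∣ a then 1 else 0)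
      = ∑ j ∈ range (v + 1), (p : ℂ) ^ j := by
    rw [Finset.sum_congr rfl e1]
    rw [← Finset.sum_filter]
    congr 1
    ext j
    simp only [mem_filter, mem_range, Nat.lt_succ_iff]
    exact ⟨fun h => h.2, fun h => ⟨lt_of_le_of_lt h hvlt, h⟩⟩
  rw [hsum, geom_sum_eq hp1]
  simp only [d, if_neg h1, ← hv]
  field_simp
  ring

lemma main_sum (p m : ℕ) (hp : p.Prime) (ξ : ℂ) (hξ : ξ ^ p ^ m = 1) :
    ∑ a ∈ range (p ^ m), ξ ^ a * d p m a
      = (m : ℂ) * (p : ℂ) ^ m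
        - ((if ξ = 1 then ((p : ℂ)) ^ m else 0) - 1) / ((p : ℂ) - 1)
        - ∑ j ∈ range m, (p : ℂ) ^ j
            * ((if ξ ^ p ^ j = 1 then ((p : ℂ)) ^ (m - j) else 0) - 1) := by
  have hp1 : (p : ℂ) ≠ 1 := by
    exact_mod_cast fun h => hp.one_lt.ne' (Nat.cast_injective h)
  have hpne : (p : ℂ) - 1 ≠ 0 := sub_ne_zero.mpr hp1
  have h0 : (0 : ℕ) ∈ range (p ^ m) := by
    simp [pow_pos hp.pos]
  rw [← Finset.add_sum_erase _ _ h0]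
  have hd0 : ξ ^ 0 * d p m 0 = (m : ℂ) * (p : ℂ) ^ m := by simp [d]
  rw [hd0]
  have hrw : ∑ a ∈ (range (p ^ m)).erase 0, ξ ^ a * d p m a
      = ∑ a ∈ (range (p ^ m)).erase 0,
          (ξ ^ a * (-1 / ((p : ℂ) - 1))
            - ∑ j ∈ range m, (p : ℂ) ^ j * (ξ ^ a * (if p ^ j ∣ a then 1 else 0))) := by
    refine Finset.sum_congr rfl fun a ha => ?_
    simp only [mem_erase, mem_range] at ha
    rw [d_decomp p m hp a ha.1 ha.2, mul_sub, Finset.mul_sum]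
    congr 1
    exact Finset.sum_congr rfl fun j _ => by ring
  rw [hrw, Finset.sum_sub_distrib, Finset.sum_comm]
  have hE : ∑ a ∈ (range (p ^ m)).erase 0, ξ ^ a
      = (if ξ = 1 then ((p : ℂ)) ^ m else 0) - 1 := by
    rw [Finset.sum_erase_eq_sub h0, sum_pow_eq ξ _ hξ, pow_zero]
    push_cast
    rfl
  have hU : ∀ j ∈ range m,
      ∑ a ∈ (range (p ^ m)).erase 0, (p : ℂ) ^ j * (ξ ^ a * (if p ^ j ∣ a then 1 else 0))
        = (p : ℂ) ^ j * ((if ξ ^ p ^ j = 1 then ((p : ℂ)) ^ (m - j) else 0) - 1) := by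
    intro j hj
    rw [← Finset.mul_sum]
    congr 1
    have : ∀ a, ξ ^ a * (if p ^ j ∣ a then 1 else 0)
        = if p ^ j ∣ a then ξ ^ a else 0 := fun a => by
      by_cases h : p ^ j ∣ a <;> simp [h]
    simp only [this]
    rw [← Finset.sum_filter, Finset.filter_erase,
      Finset.sum_erase_eq_sub (by simp [mem_filter, pow_pos hp.pos] : (0 : ℕ) ∈
        (range (p ^ m)).filter (fun a => p ^ j ∣ a)),
      filter_dvd_sum ξ p j m hp.pos (le_of_lt (mem_range.mp hj)),
      sum_pow_eq _ _ (by
        rw [← pow_mul, ← pow_add, Nat.add_sub_cancel' (le_of_lt (mem_range.mp hj))]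
        exact hξ)]
    push_cast
    simp
  rw [Finset.sum_congr rfl hU, ← Finset.sum_mul, hE]
  ring

/-- Transfer the group sum to a sum over `range (p^m)`. -/
lemma transfer (p m : ℕ) [NeZero (p ^ m)] (ξ : ℂ)
    (F : Multiplicative (ZMod (p ^ m)) → ℂ)
    (hF : ∀ g, F g = ξ ^ (Multiplicative.toAdd g).val) :
    ∑ g : Multiplicative (ZMod (p ^ m)), F g * deltaMult p m g
      = ∑ a ∈ range (p ^ m), ξ ^ a * d p m a := by
  refine Finset.sum_nbij' (fun g => (Multiplicative.toAdd g).val)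
    (fun a => Multiplicative.ofAdd ((a : ℕ) : ZMod (p ^ m))) ?_ ?_ ?_ ?_ ?_
  · intro g _
    simpa using ZMod.val_lt (Multiplicative.toAdd g)
  · intro a _
    simp
  · intro g _
    simp [ZMod.natCast_rightInverse (Multiplicative.toAdd g)]
  · intro a ha
    simp only [mem_range] at ha
    simp [ZMod.val_natCast_of_lt ha]
  · intro g _
    rw [hF]
    congr 1
    simp only [deltaMult, d, ZMod.val_eq_zero]

lemma chi_val (p m : ℕ) [NeZero (p ^ m)] (χ : Multiplicative (ZMod (p ^ m)) →* ℂ)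
    (x : ZMod (p ^ m)) :
    χ (Multiplicative.ofAdd x) = (χ (Multiplicative.ofAdd (1 : ZMod (p ^ m)))) ^ x.val := by
  conv_lhs => rw [← ZMod.natCast_rightInverse x]
  have h1 : ((x.val : ℕ) : ZMod (p ^ m)) = x.val • (1 : ZMod (p ^ m)) := by
    simp [nsmul_eq_mul]
  rw [h1, ofAdd_nsmul, map_pow]

end Stmt0Aux

open Stmt0Aux in
/-- For `G` cyclic of order `p^m` and `χ` an irreducible character of `G`
(i.e. a homomorphism `G →* ℂ`) of order `p^n` with `n > 0`, one has
`⟨χ, δ_G^mult⟩ = (np - n + 1)/(p - 1)`; moreover `⟨1_G, δ_G^mult⟩ = 0`. -/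
theorem stmt0 (p m : ℕ) (hp : p.Prime) [NeZero (p ^ m)]
    (χ : Multiplicative (ZMod (p ^ m)) →* ℂ) (n : ℕ) (hn : 0 < n)
    (hχ : orderOf χ = p ^ n) :
    innerCF (⇑χ) (deltaMult p m) = ((n * p : ℂ) - n + 1) / ((p : ℂ) - 1) ∧
    innerCF (fun _ : Multiplicative (ZMod (p ^ m)) => (1 : ℂ)) (deltaMult p m) = 0 := by
  haveI : Fact p.Prime := ⟨hp⟩
  have hp1 : (p : ℂ) ≠ 1 := by
    exact_mod_cast fun h => hp.one_lt.ne' (Nat.cast_injective h)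
  have hpne : (p : ℂ) - 1 ≠ 0 := sub_ne_zero.mpr hp1
  have hpm0 : ((p : ℂ)) ^ m ≠ 0 := pow_ne_zero m (by exact_mod_cast hp.pos.ne')
  have hcard : Fintype.card (Multiplicative (ZMod (p ^ m))) = p ^ m := by
    rw [Fintype.card_multiplicative, ZMod.card]
  set ζ : ℂ := χ (Multiplicative.ofAdd (1 : ZMod (p ^ m))) with hζ
  set ξ : ℂ := (starRingEnd ℂ) ζ with hξdef
  -- order of ζ
  have hiff : ∀ k : ℕ, χ ^ k = 1 ↔ ζ ^ k = 1 := by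
    intro k
    constructor
    · intro h
      have := DFunLike.congr_fun h (Multiplicative.ofAdd (1 : ZMod (p ^ m)))
      simpa [MonoidHom.pow_apply] using this
    · intro h
      refine MonoidHom.ext fun g => ?_
      have hg : χ g = ζ ^ (Multiplicative.toAdd g).val := by
        rw [← chi_val p m χ]
        simp
      rw [MonoidHom.pow_apply, hg, ← pow_mul, mul_comm, pow_mul, h, one_pow,
        MonoidHom.one_apply]
  have hordζ : orderOf ζ = p ^ n := by
    rw [← hχ]
    exact orderOf_eq_orderOf_iff.mpr fun k => (hiff k).symm
  have hordξ : orderOf ξ = p ^ n := by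
    rw [← hordζ]
    refine orderOf_eq_orderOf_iff.mpr fun k => ?_
    rw [hξdef, ← map_pow]
    constructor
    · intro h
      have := congrArg (starRingEnd ℂ) h
      simpa using this
    · intro h; rw [h]; simp
  have hnm : n ≤ m := by
    have hχpm : χ ^ p ^ m = 1 := by
      refine MonoidHom.ext fun g => ?_
      rw [MonoidHom.pow_apply, ← map_pow]
      have hg1 : g ^ p ^ m = 1 := by
        have h2 := pow_card_eq_one (G := Multiplicative (ZMod (p ^ m))) (x := g)
        rwa [hcard] at h2
      rw [hg1, map_one, MonoidHom.one_apply]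
    have : p ^ n ∣ p ^ m := hχ ▸ orderOf_dvd_of_pow_eq_one hχpm
    exact (Nat.pow_dvd_pow_iff_le_right hp.one_lt).mp this
  have hξpm : ξ ^ p ^ m = 1 := by
    have : orderOf ξ ∣ p ^ m := hordξ ▸ pow_dvd_pow p hnm
    exact orderOf_dvd_iff_pow_eq_one.mp this
  have hξne1 : ξ ≠ 1 := by
    intro h
    rw [h, orderOf_one] at hordξ
    exact (Nat.one_lt_pow hn.ne' hp.one_lt).ne' hordξ.symm
  have hξpj : ∀ j, (ξ ^ p ^ j = 1 ↔ n ≤ j) := by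
    intro j
    rw [← orderOf_dvd_iff_pow_eq_one, hordξ]
    exact Nat.pow_dvd_pow_iff_le_right hp.one_lt
  have hgeom : ∑ j ∈ range m, (p : ℂ) ^ j = ((p : ℂ) ^ m - 1) / ((p : ℂ) - 1) :=
    geom_sum_eq hp1 m
  constructor
  · -- nontrivial character
    have hFs : ∀ g : Multiplicative (ZMod (p ^ m)),
        (starRingEnd ℂ) (χ g) = ξ ^ (Multiplicative.toAdd g).val := by
      intro g
      have : χ g = ζ ^ (Multiplicative.toAdd g).val := by
        rw [← chi_val p m χ]; simp
      rw [this, map_pow]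
    rw [innerCF, transfer p m ξ _ hFs, main_sum p m hp ξ hξpm, hcard]
    have hsum2 : ∑ j ∈ range m, (p : ℂ) ^ j
        * ((if ξ ^ p ^ j = 1 then ((p : ℂ)) ^ (m - j) else 0) - 1)
        = ((m : ℂ) - n) * (p : ℂ) ^ m - ((p : ℂ) ^ m - 1) / ((p : ℂ) - 1) := by
      have h1 : ∀ j ∈ range m, (p : ℂ) ^ j
          * ((if ξ ^ p ^ j = 1 then ((p : ℂ)) ^ (m - j) else 0) - 1)
          = (if n ≤ j then ((p : ℂ)) ^ m else 0) - (p : ℂ) ^ j := by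
        intro j hj
        simp only [hξpj j]
        by_cases h : n ≤ j
        · simp only [if_pos h]
          rw [mul_sub, ← pow_add, Nat.add_sub_cancel' (le_of_lt (mem_range.mp hj))]
          ring
        · simp only [if_neg h]; ring
      rw [Finset.sum_congr rfl h1, Finset.sum_sub_distrib, hgeom]
      congr 1
      rw [← Finset.sum_filter]
      have : (range m).filter (fun j => n ≤ j) = Finset.Ico n m := by
        ext j; simp [mem_filter, mem_range, Finset.mem_Ico, and_comm]
      rw [this, Finset.sum_const, Nat.card_Ico, nsmul_eq_mul]
      rw [Nat.cast_sub hnm]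
    rw [if_neg hξne1, hsum2]
    push_cast
    field_simp
    ring
  · -- trivial character
    have hFs : ∀ g : Multiplicative (ZMod (p ^ m)),
        (starRingEnd ℂ) ((fun _ : Multiplicative (ZMod (p ^ m)) => (1 : ℂ)) g)
          = (1 : ℂ) ^ (Multiplicative.toAdd g).val := by
      intro g; simp
    rw [innerCF, transfer p m 1 _ (by intro g; simp),
      main_sum p m hp 1 (one_pow _), hcard]
    have hsum2 : ∑ j ∈ range m, (p : ℂ) ^ j
        * ((if (1 : ℂ) ^ p ^ j = 1 then ((p : ℂ)) ^ (m - j) else 0) - 1)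
        = (m : ℂ) * (p : ℂ) ^ m - ((p : ℂ) ^ m - 1) / ((p : ℂ) - 1) := by
      have h1 : ∀ j ∈ range m, (p : ℂ) ^ j
          * ((if (1 : ℂ) ^ p ^ j = 1 then ((p : ℂ)) ^ (m - j) else 0) - 1)
          = (p : ℂ) ^ m - (p : ℂ) ^ j := by
        intro j hj
        rw [one_pow, if_pos rfl, mul_sub, ← pow_add,
          Nat.add_sub_cancel' (le_of_lt (mem_range.mp hj))]
        ring
      rw [Finset.sum_congr rfl h1, Finset.sum_sub_distrib, hgeom, Finset.sum_const,
        card_range, nsmul_eq_mul]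
    rw [hsum2, if_pos rfl]
    push_cast
    ring
end

section
/- With δ the class function on the cyclic group G of order p^m defined by δ(σ^a) = -p^(i+1)/(p-1) for a ≢ 0 (where i = ord_p(a)) and δ(1) = m·p^m, one has ⟨ψ, δ⟩ ≥ 0 for every character ψ of a complex representation of G; i.e., δ is a nonnegative rational combination of irreducible characters with nonnegative coefficients. -/
open Finset

open Module Representation

private lemma sum_char_subgroup {G : Type} [Group G] [Fintype G] (V : FDRep ℂ G) (H : Subgroup G)
    [Fintype H] :
    ∑ h : H, V.character h
      = (Fintype.card H : ℂ) * (finrank ℂ (invariants (V.ρ.comp H.subtype)) : ℂ) := by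
  have hinv : Invertible (Fintype.card H : ℂ) :=
    invertibleOfNonzero (by exact_mod_cast Fintype.card_ne_zero)
  have h := FDRep.average_char_eq_finrank_invariants (FDRep.of (V.ρ.comp H.subtype))
  have hc : ∀ h : H, (FDRep.of (V.ρ.comp H.subtype)).character h = V.character h := fun h => rfl
  simp only [hc] at h
  rw [Nat.card_eq_fintype_card, inv_mul_eq_iff_eq_mul₀ (by exact_mod_cast Fintype.card_ne_zero)] at h
  rw [h]
  rfl

private noncomputable def resHom (p m j : ℕ) (h : p ^ j ∣ p ^ m) :
    Multiplicative (ZMod (p ^ m)) →* Multiplicative (ZMod (p ^ j)) :=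
  AddMonoidHom.toMultiplicative (ZMod.castHom h (ZMod (p ^ j))).toAddMonoidHom

private lemma mem_resHom_ker (p m j : ℕ) (hp : p.Prime) (h : p ^ j ∣ p ^ m) [NeZero (p ^ m)]
    (g : Multiplicative (ZMod (p ^ m))) :
    g ∈ (resHom p m j h).ker ↔ p ^ j ∣ (Multiplicative.toAdd g).val := by
  haveI : NeZero (p ^ j) := ⟨pow_ne_zero _ hp.pos.ne'⟩
  rw [MonoidHom.mem_ker]
  show Multiplicative.ofAdd ((ZMod.castHom h (ZMod (p ^ j))) (Multiplicative.toAdd g)) = 1 ↔ _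
  rw [← ofAdd_zero, Multiplicative.ofAdd.apply_eq_iff_eq, ZMod.castHom_apply,
    ← ZMod.natCast_val, ZMod.natCast_eq_zero_iff]

private lemma resHom_surjective (p m j : ℕ) (hp : p.Prime) (hj : j ≤ m) [NeZero (p ^ m)] :
    Function.Surjective (resHom p m j (pow_dvd_pow p hj)) := by
  haveI : NeZero (p ^ j) := ⟨pow_ne_zero _ hp.pos.ne'⟩
  intro y
  refine ⟨Multiplicative.ofAdd (((Multiplicative.toAdd y).val : ℕ) : ZMod (p ^ m)), ?_⟩
  show Multiplicative.ofAdd ((ZMod.castHom (pow_dvd_pow p hj) (ZMod (p ^ j)))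
      (((Multiplicative.toAdd y).val : ℕ) : ZMod (p ^ m))) = y
  rw [map_natCast, ZMod.natCast_val, ZMod.cast_id]
  exact ofAdd_toAdd y

private lemma card_resHom_ker (p m j : ℕ) (hp : p.Prime) (hj : j ≤ m) [NeZero (p ^ m)] :
    Nat.card (resHom p m j (pow_dvd_pow p hj)).ker = p ^ (m - j) := by
  haveI : NeZero (p ^ j) := ⟨pow_ne_zero _ hp.pos.ne'⟩
  have h1 := Subgroup.card_mul_index (resHom p m j (pow_dvd_pow p hj)).ker
  rw [Subgroup.index_ker, MonoidHom.range_eq_top.mpr (resHom_surjective p m j hp hj)] at h1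
  have h2 : Nat.card (Multiplicative (ZMod (p ^ m))) = p ^ m := by
    simp [Nat.card_eq_fintype_card, ZMod.card]
  have h3 : Nat.card (⊤ : Subgroup (Multiplicative (ZMod (p ^ j)))) = p ^ j := by
    rw [Subgroup.card_top]
    simp [Nat.card_eq_fintype_card, ZMod.card]
  rw [h2, h3] at h1
  have hpj : 0 < p ^ j := pow_pos hp.pos j
  have h4 : p ^ m = p ^ (m - j) * p ^ j := by rw [← pow_add]; congr 1; omega
  exact Nat.eq_of_mul_eq_mul_right hpj (h1.trans h4)

private lemma S_eq (p m j : ℕ) (hp : p.Prime) (hj : j ≤ m) [NeZero (p ^ m)]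
    (V : FDRep ℂ (Multiplicative (ZMod (p ^ m)))) :
    ∃ d : ℕ, d ≤ finrank ℂ V ∧
      ∑ g : Multiplicative (ZMod (p ^ m)),
        (if p ^ j ∣ (Multiplicative.toAdd g).val then (starRingEnd ℂ) (V.character g) else 0)
      = ((p ^ (m - j) * d : ℕ) : ℂ) := by
  classical
  set H := (resHom p m j (pow_dvd_pow p hj)).ker with hH
  refine ⟨finrank ℂ (invariants (V.ρ.comp H.subtype)), Submodule.finrank_le _, ?_⟩
  have h1 : ∑ g : Multiplicative (ZMod (p ^ m)),
      (if p ^ j ∣ (Multiplicative.toAdd g).val then (starRingEnd ℂ) (V.character g) else 0)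
      = ∑ h : H, (starRingEnd ℂ) (V.character h) := by
    rw [← Finset.sum_filter]
    exact Finset.sum_subtype _
      (fun x => by simp [Finset.mem_filter, mem_resHom_ker p m j hp (pow_dvd_pow p hj), hH]) _
  rw [h1, ← map_sum, sum_char_subgroup]
  have hcard : (Fintype.card H : ℂ) = ((p ^ (m - j) : ℕ) : ℂ) := by
    rw [← Nat.card_eq_fintype_card, card_resHom_ker p m j hp hj]
  rw [hcard]
  push_cast
  rw [map_mul]
  simp

/-- the coefficients -/
private noncomputable def alph (p m : ℕ) : ℕ → ℝ := fun j =>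
  if j = 0 then -(p : ℝ) / ((p : ℝ) - 1)
  else if j = m then (m : ℝ) * (p : ℝ) ^ m + (p : ℝ) ^ m / ((p : ℝ) - 1)
  else -(p : ℝ) ^ j

private lemma delta_expand (p m : ℕ) (hp : p.Prime) (hm : 1 ≤ m) [NeZero (p ^ m)]
    (g : Multiplicative (ZMod (p ^ m))) :
    deltaMult p m g
      = ∑ j ∈ range (m + 1),
          (if p ^ j ∣ (Multiplicative.toAdd g).val then ((alph p m j : ℝ) : ℂ) else 0) := by
  haveI : Fact p.Prime := ⟨hp⟩
  have hp1 : (p : ℂ) ≠ 1 := by exact_mod_cast hp.one_lt.ne'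
  have hps : (p : ℂ) - 1 ≠ 0 := sub_ne_zero.mpr hp1
  by_cases ha : Multiplicative.toAdd g = 0
  · rw [deltaMult, if_pos ha]
    have hval : (Multiplicative.toAdd g).val = 0 := by rw [ha, ZMod.val_zero]
    rw [Finset.sum_congr rfl
      (fun j _ => if_pos (show p ^ j ∣ (Multiplicative.toAdd g).val from hval ▸ dvd_zero _))]
    rw [Finset.range_eq_Ico, Finset.sum_eq_sum_Ico_succ_bot (by omega)]
    rw [Finset.sum_Ico_succ_top (by omega)]
    have hmid : ∑ j ∈ Ico 1 m, ((alph p m j : ℝ) : ℂ) = -(((p:ℂ) ^ m - (p:ℂ)) / ((p:ℂ) - 1)) := by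
      rw [Finset.sum_congr rfl (fun j hj => ?_), Finset.sum_neg_distrib,
        geom_sum_Ico hp1 (by omega), pow_one]
      · rw [mem_Ico] at hj
        rw [alph, if_neg (by omega), if_neg (by omega)]
        push_cast
        ring
    rw [hmid, alph, alph, if_pos rfl, if_neg (by omega), if_pos rfl]
    push_cast
    field_simp
    ring
  · rw [deltaMult, if_neg ha]
    set i := padicValNat p (Multiplicative.toAdd g).val with hi
    have hv0 : (Multiplicative.toAdd g).val ≠ 0 := fun h =>
      ha (by rwa [ZMod.val_eq_zero] at h)
    have hdvd_iff : ∀ jj, (p ^ jj ∣ (Multiplicative.toAdd g).val ↔ jj ≤ i) := fun jj =>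
      padicValNat_dvd_iff_le hv0
    have him : i < m := by
      by_contra h
      push_neg at h
      have hd := (hdvd_iff m).2 h
      have h1 := Nat.le_of_dvd (Nat.pos_of_ne_zero hv0) hd
      have h2 := ZMod.val_lt (Multiplicative.toAdd g)
      omega
    have hfilter : (range (m + 1)).filter (fun j => p ^ j ∣ (Multiplicative.toAdd g).val)
        = range (i + 1) := by
      ext x
      simp only [mem_filter, mem_range, hdvd_iff]
      omega
    rw [show (∑ j ∈ range (m + 1),
          (if p ^ j ∣ (Multiplicative.toAdd g).val then ((alph p m j : ℝ) : ℂ) else 0))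
        = ∑ j ∈ (range (m + 1)).filter (fun j => p ^ j ∣ (Multiplicative.toAdd g).val),
            ((alph p m j : ℝ) : ℂ) from (Finset.sum_filter _ _).symm]
    rw [hfilter, Finset.range_eq_Ico, Finset.sum_eq_sum_Ico_succ_bot (by omega)]
    have hmid : ∑ j ∈ Ico 1 (i + 1), ((alph p m j : ℝ) : ℂ)
        = -(((p:ℂ) ^ (i + 1) - (p:ℂ)) / ((p:ℂ) - 1)) := by
      rw [Finset.sum_congr rfl (fun j hj => ?_), Finset.sum_neg_distrib,
        geom_sum_Ico hp1 (by omega), pow_one]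
      · rw [mem_Ico] at hj
        rw [alph, if_neg (by omega), if_neg (by omega)]
        push_cast
        ring
    rw [hmid, alph, if_pos rfl]
    push_cast
    field_simp
    ring

/-- `δ_G^mult ∈ R⁺(G,ℚ)`: for every character `ψ` of a finite-dimensional complex
representation of the cyclic group `G` of order `p^m`, the inner product
`⟨ψ, δ_G^mult⟩` is a nonnegative (real, in fact rational) number. -/
theorem stmt1 (p m : ℕ) (hp : p.Prime) [NeZero (p ^ m)]
    (V : FDRep ℂ (Multiplicative (ZMod (p ^ m)))) :
    ∃ q : ℝ, 0 ≤ q ∧ innerCF V.character (deltaMult p m) = (q : ℂ) := by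
  classical
  by_cases hm : m = 0
  · subst hm
    refine ⟨0, le_refl 0, ?_⟩
    haveI hss : Subsingleton (ZMod (p ^ 0)) := by
      rw [pow_zero]
      exact inferInstanceAs (Subsingleton (ZMod 1))
    have hδ : ∀ g : Multiplicative (ZMod (p ^ 0)), deltaMult p 0 g = 0 := fun g => by
      rw [deltaMult, if_pos (Subsingleton.elim _ _)]
      simp
    simp [innerCF, hδ]
    exact Finset.sum_eq_zero (fun g _ => by rw [hδ g, mul_zero])
  · have hm1 : 1 ≤ m := by omega
    haveI : Fact p.Prime := ⟨hp⟩
    have hp1 : (p : ℝ) - 1 ≠ 0 := by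
      have : (1:ℝ) < (p:ℝ) := by exact_mod_cast hp.one_lt
      intro h; nlinarith
    have hp1' : (0:ℝ) < (p : ℝ) - 1 := by
      have : (1:ℝ) < (p:ℝ) := by exact_mod_cast hp.one_lt
      linarith
    set N := finrank ℂ V with hN
    set S : ℕ → ℂ := fun j => ∑ g : Multiplicative (ZMod (p ^ m)),
      (if p ^ j ∣ (Multiplicative.toAdd g).val then (starRingEnd ℂ) (V.character g) else 0)
      with hSdef
    have hcardG : (Fintype.card (Multiplicative (ZMod (p ^ m))) : ℂ) = (p : ℂ) ^ m := by
      rw [Fintype.card_multiplicative, ZMod.card]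
      push_cast
      rfl
    -- Step B
    have hB : innerCF V.character (deltaMult p m)
        = ((p : ℂ) ^ m)⁻¹ * ∑ j ∈ range (m + 1), ((alph p m j : ℝ) : ℂ) * S j := by
      rw [innerCF, hcardG]
      congr 1
      calc ∑ g : Multiplicative (ZMod (p ^ m)), (starRingEnd ℂ) (V.character g) * deltaMult p m g
          = ∑ g : Multiplicative (ZMod (p ^ m)), ∑ j ∈ range (m + 1),
              ((alph p m j : ℝ) : ℂ) *
                (if p ^ j ∣ (Multiplicative.toAdd g).val
                  then (starRingEnd ℂ) (V.character g) else 0) := by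
            refine Finset.sum_congr rfl fun g _ => ?_
            rw [delta_expand p m hp hm1 g, Finset.mul_sum]
            refine Finset.sum_congr rfl fun j _ => ?_
            split_ifs <;> ring
        _ = ∑ j ∈ range (m + 1), ((alph p m j : ℝ) : ℂ) * S j := by
            rw [Finset.sum_comm]
            exact Finset.sum_congr rfl fun j _ => (Finset.mul_sum _ _ _).symm
    -- value at j = m
    have hSm : S m = (N : ℂ) := by
      have hcond : ∀ g : Multiplicative (ZMod (p ^ m)),
          (p ^ m ∣ (Multiplicative.toAdd g).val) ↔ g = 1 := by
        intro g
        constructor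
        · intro hd
          have h2 := ZMod.val_lt (Multiplicative.toAdd g)
          have : (Multiplicative.toAdd g).val = 0 := by
            rcases Nat.eq_zero_of_dvd_of_lt hd h2 with h
            · exact h
          have h0 : Multiplicative.toAdd g = 0 := by rwa [ZMod.val_eq_zero] at this
          rwa [toAdd_eq_zero] at h0
        · intro h
          subst h
          simp [ZMod.val_zero]
      rw [hSdef]
      simp only []
      rw [Finset.sum_congr rfl (fun g _ => if_congr (hcond g) rfl rfl), Finset.sum_ite_eq' univ
        (1 : Multiplicative (ZMod (p ^ m)))]
      simp [FDRep.char_one]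
      exact hN.symm
    -- realness and bounds
    set s : ℕ → ℝ := fun j => (S j).re with hs
    have hreal : ∀ j ∈ range (m + 1), S j = ((s j : ℝ) : ℂ) ∧
        alph p m j * ((p : ℝ) ^ (m - j) * N) ≤ alph p m j * s j := by
      intro j hj
      rw [mem_range] at hj
      rcases eq_or_lt_of_le (Nat.lt_succ_iff.mp hj) with hjm | hjm
      · subst hjm
        have h1 : s j = (N : ℝ) := by
          show (S j).re = _
          rw [hSm]
          simp
        constructor
        · rw [hSm, h1]; norm_cast
        · rw [h1, Nat.sub_self, pow_zero, one_mul]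
      · obtain ⟨d, hdN, hSj⟩ := S_eq p m j hp (le_of_lt hjm) V
        have hSj' : S j = ((p ^ (m - j) * d : ℕ) : ℂ) := hSj
        have h1 : s j = ((p ^ (m - j) * d : ℕ) : ℝ) := by
          show (S j).re = _
          rw [hSj']
          exact Complex.natCast_re _
        have halphneg : alph p m j ≤ 0 := by
          rw [alph]
          split_ifs with h0 hm0
          · apply div_nonpos_of_nonpos_of_nonneg
            · simp only [neg_nonpos]; positivity
            · linarith
          · omega
          · simp only [neg_nonpos]; positivity
        constructor
        · rw [hSj', h1]; norm_cast
        · apply mul_le_mul_of_nonpos_left _ halphneg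
          rw [h1]
          push_cast
          apply mul_le_mul_of_nonneg_left _ (by positivity)
          exact_mod_cast hdN
    -- the zero sum
    have hzero : ∑ j ∈ range (m + 1), alph p m j * ((p : ℝ) ^ (m - j) * N) = 0 := by
      rw [Finset.range_eq_Ico, Finset.sum_eq_sum_Ico_succ_bot (by omega : 0 < m + 1)]
      rw [Finset.sum_Ico_succ_top (by omega : 1 ≤ m)]
      have hmid : ∑ j ∈ Ico 1 m, alph p m j * ((p : ℝ) ^ (m - j) * N)
          = (m - 1 : ℝ) * (-(p : ℝ) ^ m * N) := by
        rw [Finset.sum_congr rfl (fun j hj => ?_), Finset.sum_const, Nat.card_Ico,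
          nsmul_eq_mul]
        · congr 1
          push_cast [Nat.cast_sub hm1]
          ring
        · rw [mem_Ico] at hj
          rw [alph, if_neg (by omega), if_neg (by omega)]
          have hpow : (p : ℝ) ^ j * (p : ℝ) ^ (m - j) = (p : ℝ) ^ m := by
            rw [← pow_add]; congr 1; omega
          nlinarith [hpow]
      rw [hmid, alph, alph, if_pos rfl, if_neg (by omega), if_pos rfl, Nat.sub_zero,
        Nat.sub_self, pow_zero]
      field_simp
      ring
    -- conclusion
    refine ⟨((p : ℝ) ^ m)⁻¹ * ∑ j ∈ range (m + 1), alph p m j * s j, ?_, ?_⟩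
    · apply mul_nonneg (by positivity)
      calc (0:ℝ) = ∑ j ∈ range (m + 1), alph p m j * ((p : ℝ) ^ (m - j) * N) := hzero.symm
        _ ≤ ∑ j ∈ range (m + 1), alph p m j * s j :=
            Finset.sum_le_sum (fun j hj => (hreal j hj).2)
    · have hsum : ∑ j ∈ range (m + 1), ((alph p m j : ℝ) : ℂ) * S j
          = ∑ j ∈ range (m + 1), ((alph p m j : ℝ) : ℂ) * ((s j : ℝ) : ℂ) :=
        Finset.sum_congr rfl (fun j hj => by rw [(hreal j hj).1])
      rw [hB, hsum]
      push_cast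
      ring
end

section
/- Let R be a complete discrete valuation ring of mixed characteristic with fraction field K, let A = R[[z]] or R{z}, and let σ be a ring automorphism of A over R with val_Y(σ(z) - z) > 0, σ ≠ id, where val_Y is the Gauss valuation. Let a ∈ R satisfy val(a) = min{ val_Y(σ(f) - f) : f ∈ A }. Then the map ∂ : A/(π) → A/(π) sending the reduction of f to the reduction of (σ(f) - f)/a is a well-defined nonzero k-derivation of Ā = A/(π). -/
open PowerSeries

/-- The Gauss valuation on `R[[z]]` (measured in multiples of the valuation of the
uniformizer `π`): `val_Y(Σ aᵢ zⁱ) = min_i val(aᵢ)`. -/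
noncomputable def gaussVal {R : Type*} [CommRing R] (π : R) (f : PowerSeries R) : ℕ∞ :=
  ⨅ i : ℕ, emultiplicity π (PowerSeries.coeff i f)

/-- Reduction mod `π` : `R[[z]] → (R/π)[[z]]`. -/
noncomputable def redMod {R : Type*} [CommRing R] (π : R) :
    PowerSeries R →+* PowerSeries (R ⧸ Ideal.span {π}) :=
  PowerSeries.map (Ideal.Quotient.mk (Ideal.span {π}))

/-- Let `R` be a complete discrete valuation ring of mixed characteristic `(0,p)` with
algebraically closed residue field, `A = R[[z]]`, and `σ ≠ id` an `R`-automorphism of `A`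
lying in the inertia group for the Gauss valuation.  Let `a ∈ R` realize the minimum of
`val_Y(σ(f) - f)` over `f ∈ A`.  Then `f̄ ↦ ((σ(f) - f)/a)‾` is a well-defined nonzero
`k`-derivation of `Ā = k[[z]]`, where `k = R/(π)`. -/
theorem stmt2 (R : Type*) [CommRing R] [IsDomain R] [IsDiscreteValuationRing R]
    [CharZero R] (π : R) (hπ : Irreducible π)
    [IsAdicComplete (Ideal.span {π}) R]
    (p : ℕ) (hp : p.Prime) (hchar : CharP (R ⧸ Ideal.span {π}) p)
    (halgcl : ∀ f : Polynomial (R ⧸ Ideal.span {π}), f.Monic → 0 < f.degree →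
      ∃ x, Polynomial.eval x f = 0)
    (σ : PowerSeries R ≃ₐ[R] PowerSeries R) (hσ : σ ≠ AlgEquiv.refl)
    (hin : 0 < gaussVal π (σ (PowerSeries.X) - PowerSeries.X))
    (a : R) (ha : emultiplicity π a = ⨅ f : PowerSeries R, gaussVal π (σ f - f)) :
    ∃ D : Derivation (R ⧸ Ideal.span {π}) (PowerSeries (R ⧸ Ideal.span {π}))
        (PowerSeries (R ⧸ Ideal.span {π})),
      D ≠ 0 ∧
      ∀ f g : PowerSeries R, σ f - f = PowerSeries.C a * g →
        D (redMod π f) = redMod π g := by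
  classical
  have hprime : Prime π := UniqueFactorizationMonoid.irreducible_iff_prime.mp hπ
  set I := Ideal.span {π} with hI
  -- reduction of a single coefficient vanishes iff π divides it
  have hred0 : ∀ f : PowerSeries R, redMod π f = 0 ↔ ∀ i, π ∣ coeff i f := by
    intro f
    constructor
    · intro h i
      have h2 := congrArg (coeff i) h
      rw [redMod, coeff_map, map_zero] at h2
      rw [← Ideal.mem_span_singleton, ← hI, ← Ideal.Quotient.eq_zero_iff_mem]
      exact h2
    · intro h
      ext i
      rw [redMod, coeff_map, map_zero, Ideal.Quotient.eq_zero_iff_mem,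
        Ideal.mem_span_singleton]
      exact h i
  -- σ fixes constants
  have hC : ∀ c : R, σ (C c) = C c := by
    intro c
    simpa [PowerSeries.algebraMap_apply] using σ.commutes c
  -- decomposition of a power series
  have hdecomp : ∀ (f : PowerSeries R) (n : ℕ), ∃ g,
      f = (Finset.range n).sum (fun i => C (coeff i f) * X ^ i) + X ^ n * g := by
    intro f n
    have hdvd : (X : PowerSeries R) ^ n ∣
        f - (Finset.range n).sum (fun i => C (coeff i f) * X ^ i) := by
      rw [X_pow_dvd_iff]
      intro m hm
      rw [map_sub, map_sum]
      have hsum : ((Finset.range n).sum fun i => coeff m (C (coeff i f) * X ^ i))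
          = coeff m f := by
        rw [Finset.sum_congr rfl (fun i _ => coeff_C_mul_X_pow (coeff i f) i m)]
        rw [Finset.sum_ite_eq (Finset.range n) m (fun i => coeff i f)]
        simp [Finset.mem_range.mpr hm]
      rw [hsum, sub_self]
    obtain ⟨g, hg⟩ := hdvd
    exact ⟨g, by rw [← hg]; ring⟩
  -- reduction of σ X
  have hXbar : redMod π (σ X) = X := by
    have h0 : redMod π (σ X - X) = 0 := by
      rw [hred0]
      intro i
      have h2 : gaussVal π (σ X - X) ≤ emultiplicity π (coeff i (σ X - X)) :=
        iInf_le _ i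
      have h1 : (1 : ℕ∞) ≤ emultiplicity π (coeff i (σ X - X)) :=
        le_trans (Order.add_one_le_of_lt hin) h2
      simpa using pow_dvd_of_le_emultiplicity h1
    have h2 : redMod π (σ X) - redMod π X = 0 := by rw [← map_sub]; exact h0
    rw [sub_eq_zero.mp h2, redMod, PowerSeries.map_X]
  have hXr : redMod π (X : PowerSeries R) = X := by rw [redMod, PowerSeries.map_X]
  -- σ is the identity mod π
  have hsig : ∀ f : PowerSeries R, redMod π (σ f) = redMod π f := by
    intro f
    ext m
    obtain ⟨g, hg⟩ := hdecomp f (m + 1)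
    have h1 : σ f = (Finset.range (m + 1)).sum (fun i => C (coeff i f) * (σ X) ^ i)
        + (σ X) ^ (m + 1) * σ g := by
      conv_lhs => rw [hg]
      rw [map_add, map_mul, map_pow, map_sum]
      congr 1
      refine Finset.sum_congr rfl fun i _ => ?_
      rw [map_mul, map_pow, hC]
    have hcoeff_top : ∀ h : PowerSeries (R ⧸ I),
        coeff m ((X : PowerSeries (R ⧸ I)) ^ (m + 1) * h) = 0 := by
      intro h
      exact X_pow_dvd_iff.mp ⟨h, rfl⟩ m (Nat.lt_succ_self m)
    have h2 : redMod π (σ f) = (Finset.range (m + 1)).sum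
        (fun i => redMod π (C (coeff i f)) * (X : PowerSeries (R ⧸ I)) ^ i)
        + (X : PowerSeries (R ⧸ I)) ^ (m + 1) * redMod π (σ g) := by
      rw [h1]
      simp only [map_add, map_sum, map_mul, map_pow, hXbar]
    have h3 : redMod π f = (Finset.range (m + 1)).sum
        (fun i => redMod π (C (coeff i f)) * (X : PowerSeries (R ⧸ I)) ^ i)
        + (X : PowerSeries (R ⧸ I)) ^ (m + 1) * redMod π g := by
      conv_lhs => rw [hg]
      simp only [map_add, map_sum, map_mul, map_pow, hXr]
    rw [h2, h3, map_add, map_add, hcoeff_top, hcoeff_top]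
  -- every σ f - f reduces to 0
  have hdvd1 : ∀ (f : PowerSeries R) (i : ℕ), π ∣ coeff i (σ f - f) := by
    intro f i
    have : redMod π (σ f - f) = 0 := by rw [map_sub, hsig, sub_self]
    exact (hred0 _).mp this i
  -- a is nonzero
  have hane : a ≠ 0 := by
    intro h0
    have htop : emultiplicity π a = ⊤ := by rw [h0]; exact emultiplicity_zero π
    have hall : ∀ f : PowerSeries R, gaussVal π (σ f - f) = ⊤ := by
      have := ha.symm.trans htop
      intro f
      exact top_le_iff.mp (this ▸ iInf_le _ f)
    have hfix : ∀ f : PowerSeries R, σ f = f := by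
      intro f
      have hc : ∀ i, coeff i (σ f - f) = 0 := by
        intro i
        have hti : emultiplicity π (coeff i (σ f - f)) = ⊤ := by
          have := hall f
          rw [gaussVal] at this
          exact top_le_iff.mp (this ▸ iInf_le _ i)
        by_contra hne
        exact (emultiplicity_eq_top.mp hti)
          (FiniteMultiplicity.of_prime_left hprime hne)
      have : σ f - f = 0 := by ext i; simpa using hc i
      exact sub_eq_zero.mp this
    exact hσ (AlgEquiv.ext fun f => hfix f)
  obtain ⟨n, hassoc⟩ := IsDiscreteValuationRing.associated_pow_irreducible hane hπ
  have hma : emultiplicity π a = (n : ℕ∞) := by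
    rw [emultiplicity_eq_of_associated_right hassoc]
    exact emultiplicity_pow_self_of_prime hprime n
  -- a divides all coefficients of σ f - f
  have hdvd_all : ∀ (f : PowerSeries R) (i : ℕ), a ∣ coeff i (σ f - f) := by
    intro f i
    have hle : (n : ℕ∞) ≤ emultiplicity π (coeff i (σ f - f)) := by
      calc (n : ℕ∞) = emultiplicity π a := hma.symm
        _ ≤ gaussVal π (σ f - f) := ha ▸ iInf_le _ f
        _ ≤ _ := iInf_le _ i
    exact hassoc.dvd.trans (pow_dvd_of_le_emultiplicity hle)
  -- the division operator d
  have hex : ∀ f : PowerSeries R, ∃ g, σ f - f = C a * g := by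
    intro f
    refine ⟨PowerSeries.mk fun i => (hdvd_all f i).choose, ?_⟩
    ext i
    rw [coeff_C_mul, coeff_mk, ← (hdvd_all f i).choose_spec]
  choose d hd using hex
  have hCa : (C a : PowerSeries R) ≠ 0 := fun h =>
    hane (by simpa using congrArg (coeff 0) h)
  have huniq : ∀ f g, σ f - f = C a * g → g = d f := by
    intro f g h
    exact mul_left_cancel₀ hCa (h.symm.trans (hd f))
  have hd_sub : ∀ f g, d (f - g) = d f - d g := by
    intro f g
    refine (huniq _ _ ?_).symm
    rw [map_sub]
    linear_combination hd f - hd g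
  have hd_add : ∀ f g, d (f + g) = d f + d g := by
    intro f g
    refine (huniq _ _ ?_).symm
    rw [map_add]
    linear_combination hd f + hd g
  have hd_C : ∀ (c : R) f, d (C c * f) = C c * d f := by
    intro c f
    refine (huniq _ _ ?_).symm
    rw [map_mul, hC]
    linear_combination (C c) * hd f
  have hd_one : d 1 = 0 := by
    refine (huniq _ _ ?_).symm
    simp
  have hd_mul : ∀ f g, d (f * g) = σ f * d g + d f * g := by
    intro f g
    refine (huniq _ _ ?_).symm
    rw [map_mul]
    linear_combination (σ f) * hd g + g * hd f
  -- kernel property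
  have hker : ∀ f, redMod π f = 0 → redMod π (d f) = 0 := by
    intro f hf
    have hdv := (hred0 f).mp hf
    have hfeq : f = C π * PowerSeries.mk fun i => (hdv i).choose := by
      ext i
      rw [coeff_C_mul, coeff_mk, ← (hdv i).choose_spec]
    have : d f = C π * d (PowerSeries.mk fun i => (hdv i).choose) := by
      conv_lhs => rw [hfeq]
      exact hd_C π _
    rw [this, map_mul]
    have hCpi : redMod π (C π) = 0 := by
      rw [redMod, PowerSeries.map_C]
      have : Ideal.Quotient.mk I π = 0 :=
        Ideal.Quotient.eq_zero_iff_mem.mpr (Ideal.subset_span rfl)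
      rw [this, map_zero]
    rw [hCpi, zero_mul]
  -- surjectivity of reduction
  have hsurj : Function.Surjective (redMod π (R := R)) := by
    intro y
    refine ⟨PowerSeries.mk fun i => (Ideal.Quotient.mk_surjective (coeff i y)).choose, ?_⟩
    ext i
    rw [redMod, coeff_map, coeff_mk, (Ideal.Quotient.mk_surjective (coeff i y)).choose_spec]
  choose lift hlift using hsurj
  set Dfun : PowerSeries (R ⧸ I) → PowerSeries (R ⧸ I) :=
    fun y => redMod π (d (lift y)) with hDfun
  have hwd : ∀ f, Dfun (redMod π f) = redMod π (d f) := by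
    intro f
    have h0 : redMod π (lift (redMod π f) - f) = 0 := by
      rw [map_sub, hlift, sub_self]
    have h1 := hker _ h0
    rw [hd_sub, map_sub] at h1
    have := sub_eq_zero.mp h1
    rw [hDfun]
    exact this
  refine ⟨⟨⟨⟨Dfun, ?_⟩, ?_⟩, ?_, ?_⟩, ?_, ?_⟩
  · -- additivity
    intro x y
    have hxy : x + y = redMod π (lift x + lift y) := by rw [map_add, hlift, hlift]
    show Dfun (x + y) = Dfun x + Dfun y
    rw [hxy, hwd, hd_add, map_add]
  · -- smul
    intro c x
    obtain ⟨c₀, rfl⟩ := Ideal.Quotient.mk_surjective c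
    show Dfun (Ideal.Quotient.mk I c₀ • x) = Ideal.Quotient.mk I c₀ • Dfun x
    have hx : Ideal.Quotient.mk I c₀ • x = redMod π (C c₀ * lift x) := by
      rw [map_mul, hlift, smul_eq_C_mul]
      congr 1
      rw [redMod, PowerSeries.map_C]
    rw [hx, hwd, hd_C, map_mul, smul_eq_C_mul]
    congr 1
    rw [redMod, PowerSeries.map_C]
  · -- maps 1 to 0
    show Dfun 1 = 0
    have h1 : (1 : PowerSeries (R ⧸ I)) = redMod π 1 := (map_one _).symm
    rw [h1, hwd, hd_one, map_zero]
  · -- Leibniz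
    intro x y
    show Dfun (x * y) = x • Dfun y + y • Dfun x
    have hxy : x * y = redMod π (lift x * lift y) := by rw [map_mul, hlift, hlift]
    rw [hxy, hwd, hd_mul, map_add, map_mul, map_mul, hsig, hlift, hlift, smul_eq_mul,
      smul_eq_mul]
    have : Dfun x = redMod π (d (lift x)) := rfl
    rw [this]
    have : Dfun y = redMod π (d (lift y)) := rfl
    rw [this]
    ring
  · -- nonzero
    intro h0
    -- find f₀ realizing the minimum
    have hlt : (⨅ f : PowerSeries R, gaussVal π (σ f - f)) < (n : ℕ∞) + 1 := by
      rw [← ha, hma]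
      exact_mod_cast Nat.lt_succ_self n
    obtain ⟨f₀, hf₀⟩ := iInf_lt_iff.mp hlt
    rw [gaussVal] at hf₀
    obtain ⟨i₀, hi₀⟩ := iInf_lt_iff.mp hf₀
    have hge : (n : ℕ∞) ≤ emultiplicity π (coeff i₀ (σ f₀ - f₀)) := by
      calc (n : ℕ∞) = emultiplicity π a := hma.symm
        _ ≤ gaussVal π (σ f₀ - f₀) := ha ▸ iInf_le _ f₀
        _ ≤ _ := iInf_le _ i₀
    have heq : emultiplicity π (coeff i₀ (σ f₀ - f₀)) = (n : ℕ∞) :=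
      le_antisymm (Order.le_of_lt_add_one hi₀) hge
    have hcoeff : coeff i₀ (σ f₀ - f₀) = a * coeff i₀ (d f₀) := by
      rw [hd f₀, coeff_C_mul]
    have hmul : (n : ℕ∞) = (n : ℕ∞) + emultiplicity π (coeff i₀ (d f₀)) := by
      rw [← hma, ← emultiplicity_mul hprime, ← hcoeff, heq, hma]
    have hzero : emultiplicity π (coeff i₀ (d f₀)) = 0 :=
      (WithTop.add_left_cancel (by simp : (n : ℕ∞) ≠ ⊤)
        (show (n : ℕ∞) + 0 = (n : ℕ∞) + _ by rw [← hmul, add_zero])).symm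
    have hnd : ¬ π ∣ coeff i₀ (d f₀) := by
      intro hdvd
      have := dvd_iff_emultiplicity_pos.mpr hdvd
      rw [hzero] at this
      exact lt_irrefl 0 this
    have hD : Dfun (redMod π f₀) = redMod π (d f₀) := hwd f₀
    have hne : redMod π (d f₀) ≠ 0 := by
      intro hz
      exact hnd ((hred0 _).mp hz i₀)
    apply hne
    rw [← hD]
    have : Dfun (redMod π f₀) = (0 : Derivation (R ⧸ I) (PowerSeries (R ⧸ I))
        (PowerSeries (R ⧸ I))) (redMod π f₀) := by rw [← h0]; rfl
    rw [this, Derivation.coe_zero, Pi.zero_apply]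
  · -- the defining property
    intro f g hfg
    show Dfun (redMod π f) = redMod π g
    rw [hwd, huniq f g hfg]
end

section
/- In the setting above, for f ∈ A one has val_Y(σ(f) - f) ≥ val_Y(σ(z) - z), with equality if and only if the differential d(f̄) of the reduction f̄ ∈ Ā is nonzero. -/
open PowerSeries

namespace Stmt3Aux

variable {R : Type*} [CommRing R]

lemma coeff_mul_dvd {c d : R} {a b : PowerSeries R}
    (ha : ∀ i, c ∣ coeff i a) (hb : ∀ i, d ∣ coeff i b) (i : ℕ) :
    c * d ∣ coeff i (a * b) := by
  rw [coeff_mul]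
  exact Finset.dvd_sum fun p _ => mul_dvd_mul (ha p.1) (hb p.2)

lemma coeff_mul_dvd_left {c : R} {a : PowerSeries R}
    (ha : ∀ i, c ∣ coeff i a) (b : PowerSeries R) (i : ℕ) :
    c ∣ coeff i (a * b) := by
  rw [coeff_mul]
  exact Finset.dvd_sum fun p _ => (ha p.1).mul_right _

lemma coeff_zero_of_X_pow_dvd {n N : ℕ} {w : PowerSeries R} (h : N < n)
    (hw : (X : PowerSeries R) ^ n ∣ w) : coeff N w = 0 :=
  X_pow_dvd_iff.mp hw N h

lemma X_pow_dvd_sub_trunc (f : PowerSeries R) (n : ℕ) :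
    (X : PowerSeries R) ^ n ∣ f - ((trunc n f : Polynomial R) : PowerSeries R) := by
  rw [X_pow_dvd_iff]
  intro m hm
  rw [map_sub, Polynomial.coeff_coe, coeff_trunc, if_pos hm, sub_self]

lemma algebraMap_eq_C : algebraMap R (PowerSeries R) = C :=
  RingHom.ext fun r => by simp [PowerSeries.algebraMap_apply]

lemma coe_eq_aeval (P : Polynomial R) :
    (P : PowerSeries R) = Polynomial.aeval (X : PowerSeries R) P := by
  rw [Polynomial.aeval_def, algebraMap_eq_C, Polynomial.eval₂_C_X_eq_coe]

lemma sigma_coe (σ : PowerSeries R ≃ₐ[R] PowerSeries R) (P : Polynomial R) :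
    σ (P : PowerSeries R) = Polynomial.aeval (σ (X : PowerSeries R)) P := by
  rw [coe_eq_aeval, Polynomial.aeval_algHom_apply σ]

lemma sigma_coe_binom (σ : PowerSeries R ≃ₐ[R] PowerSeries R) (P : Polynomial R) :
    ∃ k : PowerSeries R, σ (P : PowerSeries R) =
      (P : PowerSeries R)
        + PowerSeries.derivative R (P : PowerSeries R) * (σ X - X)
        + k * (σ X - X) ^ 2 := by
  obtain ⟨k, hk⟩ := Polynomial.binomExpansion (P.map C) X (σ X - X)
  refine ⟨k, ?_⟩
  have hev : ∀ (Q : Polynomial R) (x : PowerSeries R),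
      Polynomial.eval x (Q.map C) = Polynomial.aeval x Q := by
    intro Q x
    rw [Polynomial.eval_map, Polynomial.aeval_def, algebraMap_eq_C]
  have h0 : (X : PowerSeries R) + (σ X - X) = σ X := by ring
  rw [h0, Polynomial.derivative_map, hev, hev, hev] at hk
  rw [sigma_coe σ P, hk, ← coe_eq_aeval, ← coe_eq_aeval, ← derivative_coe]

lemma coeff_shift_pow_mul (π : R) {mn : ℕ} {t : PowerSeries R}
    (ht : ∀ i, π ^ mn ∣ coeff i t) (w : PowerSeries R) (N : ℕ) :
    π ^ (mn + mn) ∣ coeff N ((X + t) ^ (N + 2) * w) := by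
  have htt : ∀ i, π ^ (mn + mn) ∣ coeff i (t * t) := fun i => by
    rw [pow_add]; exact coeff_mul_dvd ht ht i
  rw [add_pow, Finset.sum_mul, map_sum]
  refine Finset.dvd_sum ?_
  intro j hj
  rcases le_or_gt j N with hjN | hjN
  · have h2 : N + 2 - j = 2 + (N + 2 - j - 2) := by omega
    have he : t ^ (N + 2 - j) = t * t * t ^ (N + 2 - j - 2) := by
      conv_lhs => rw [h2]
      rw [pow_add, pow_two]
    have he2 : (X : PowerSeries R) ^ j * t ^ (N + 2 - j) * ((N + 2).choose j : PowerSeries R) * w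
        = t * t * (X ^ j * t ^ (N + 2 - j - 2) * ((N + 2).choose j : PowerSeries R) * w) := by
      rw [he]; ring
    rw [he2]
    exact coeff_mul_dvd_left htt _ _
  · have hz : coeff N
        ((X : PowerSeries R) ^ j * t ^ (N + 2 - j) * ((N + 2).choose j : PowerSeries R) * w) = 0 :=
      coeff_zero_of_X_pow_dvd hjN ⟨t ^ (N + 2 - j) * ((N + 2).choose j : PowerSeries R) * w, by ring⟩
    rw [hz]
    exact dvd_zero _

lemma key_dvd (π : R) (σ : PowerSeries R ≃ₐ[R] PowerSeries R) {mn : ℕ} (hm1 : 1 ≤ mn)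
    (ht : ∀ i, π ^ mn ∣ coeff i (σ X - X)) (f : PowerSeries R) (N : ℕ) :
    π ^ (mn + 1) ∣ coeff N (σ f - f - (σ X - X) * PowerSeries.derivative R f) := by
  set t := σ (X : PowerSeries R) - X with htdef
  have hpowle : π ^ (mn + 1) ∣ π ^ (mn + mn) := pow_dvd_pow _ (by omega)
  set n := N + 2 with hn
  set P := trunc n f with hP
  obtain ⟨h, hh⟩ := X_pow_dvd_sub_trunc f n
  obtain ⟨k, hk⟩ := sigma_coe_binom σ P
  have hσX : σ (X : PowerSeries R) = X + t := by rw [htdef]; ring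
  have hf : f = (P : PowerSeries R) + X ^ n * h := by rw [← hh]; ring
  have hσf : σ f = σ (P : PowerSeries R) + (X + t) ^ n * σ h := by
    conv_lhs => rw [hf]
    rw [map_add, map_mul, map_pow, hσX]
  have hsplit : σ f - f - t * PowerSeries.derivative R f
      = k * t ^ 2 + (X + t) ^ n * σ h - X ^ n * h
        - t * (PowerSeries.derivative R f - PowerSeries.derivative R (P : PowerSeries R)) := by
    linear_combination hσf + hk - hf
  have hzero1 : coeff N ((X : PowerSeries R) ^ n * h) = 0 :=
    coeff_zero_of_X_pow_dvd (by omega) (dvd_mul_right _ _)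
  have hzero2 : coeff N
      (t * (PowerSeries.derivative R f - PowerSeries.derivative R (P : PowerSeries R))) = 0 := by
    rw [coeff_mul]
    apply Finset.sum_eq_zero
    intro q hq
    rw [Finset.HasAntidiagonal.mem_antidiagonal] at hq
    have hc0 : coeff q.2
        (PowerSeries.derivative R f - PowerSeries.derivative R (P : PowerSeries R)) = 0 := by
      rw [map_sub, PowerSeries.coeff_derivative, PowerSeries.coeff_derivative, hP,
        Polynomial.coeff_coe, coeff_trunc, if_pos (by omega : q.2 + 1 < n), sub_self]
    rw [hc0, mul_zero]
  have hA : π ^ (mn + 1) ∣ coeff N (k * t ^ 2) := by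
    have he : k * t ^ 2 = t * t * k := by ring
    rw [he]
    refine hpowle.trans ?_
    exact coeff_mul_dvd_left (fun i => by rw [pow_add]; exact coeff_mul_dvd ht ht i) _ _
  have hB : π ^ (mn + 1) ∣ coeff N ((X + t) ^ n * σ h) := by
    rw [hn]
    exact hpowle.trans (coeff_shift_pow_mul π ht (σ h) N)
  rw [hsplit, map_sub, map_sub, map_add, hzero1, hzero2, sub_zero, sub_zero]
  exact dvd_add hA hB

lemma gaussVal_le_emult (π : R) (g : PowerSeries R) (i : ℕ) :
    gaussVal π g ≤ emultiplicity π (coeff i g) :=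
  iInf_le _ i

lemma le_gaussVal_iff (π : R) (g : PowerSeries R) (c : ℕ) :
    (c : ℕ∞) ≤ gaussVal π g ↔ ∀ i, π ^ c ∣ coeff i g := by
  simp [gaussVal, le_iInf_iff, ← pow_dvd_iff_le_emultiplicity]

lemma redMod_eq_zero_iff (π : R) (g : PowerSeries R) :
    redMod π g = 0 ↔ ∀ i, π ∣ coeff i g := by
  rw [PowerSeries.ext_iff]
  apply forall_congr'
  intro i
  rw [redMod, PowerSeries.coeff_map, map_zero, Ideal.Quotient.eq_zero_iff_mem,
    Ideal.mem_span_singleton]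

lemma derivative_redMod (π : R) (f : PowerSeries R) :
    PowerSeries.derivative (R ⧸ Ideal.span {π}) (redMod π f)
      = redMod π (PowerSeries.derivative R f) := by
  ext n
  rw [PowerSeries.coeff_derivative, redMod, PowerSeries.coeff_map, PowerSeries.coeff_map,
    PowerSeries.coeff_derivative, map_mul, map_add, map_natCast, map_one]

end Stmt3Aux

open Stmt3Aux in
/-- In the setting of the derivation lemma (`R` a complete DVR of mixed characteristic
`(0,p)` with algebraically closed residue field, `σ ≠ id` an `R`-automorphism of
`A = R[[z]]` in the inertia group), for every `f ∈ A` one has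
`val_Y(σ(f) - f) ≥ val_Y(σ(z) - z)`, with equality if and only if the (formal)
differential `d f̄` of the reduction `f̄ ∈ k[[z]]` is nonzero. -/
theorem stmt3 (R : Type*) [CommRing R] [IsDomain R] [IsDiscreteValuationRing R]
    [CharZero R] (π : R) (hπ : Irreducible π)
    [IsAdicComplete (Ideal.span {π}) R]
    (p : ℕ) (hp : p.Prime) (hchar : CharP (R ⧸ Ideal.span {π}) p)
    (halgcl : ∀ f : Polynomial (R ⧸ Ideal.span {π}), f.Monic → 0 < f.degree →
      ∃ x, Polynomial.eval x f = 0)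
    (σ : PowerSeries R ≃ₐ[R] PowerSeries R) (hσ : σ ≠ AlgEquiv.refl)
    (hin : 0 < gaussVal π (σ (PowerSeries.X) - PowerSeries.X))
    (f : PowerSeries R) :
    gaussVal π (σ PowerSeries.X - PowerSeries.X) ≤ gaussVal π (σ f - f) ∧
    (gaussVal π (σ f - f) = gaussVal π (σ PowerSeries.X - PowerSeries.X) ↔
      PowerSeries.derivative (R ⧸ Ideal.span {π}) (redMod π f) ≠ 0) := by
  classical
  have hprime : Prime π := UniqueFactorizationMonoid.irreducible_iff_prime.mp hπ
  haveI : (Ideal.span ({π} : Set R)).IsPrime :=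
    (Ideal.span_singleton_prime hprime.ne_zero).mpr hprime
  set t := σ (X : PowerSeries R) - X with htdef
  -- t ≠ 0
  have htne : t ≠ 0 := by
    intro h0
    apply hσ
    have hX : σ (X : PowerSeries R) = X := by
      have := h0
      rw [htdef, sub_eq_zero] at this
      exact this
    refine AlgEquiv.ext fun g => ?_
    rw [AlgEquiv.coe_refl, id_eq]
    ext N
    obtain ⟨h, hh⟩ := X_pow_dvd_sub_trunc g (N + 1)
    have hg : g = ((trunc (N + 1) g : Polynomial R) : PowerSeries R) + X ^ (N + 1) * h := by
      rw [← hh]; ring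
    have hσP : σ ((trunc (N + 1) g : Polynomial R) : PowerSeries R)
        = ((trunc (N + 1) g : Polynomial R) : PowerSeries R) := by
      rw [sigma_coe, hX, ← coe_eq_aeval]
    have h1 : coeff N (σ g)
        = coeff N ((trunc (N + 1) g : Polynomial R) : PowerSeries R) := by
      conv_lhs => rw [hg]
      rw [map_add, map_mul, map_pow, hX, hσP, map_add,
        coeff_zero_of_X_pow_dvd (Nat.lt_succ_self N) (dvd_mul_right _ _), add_zero]
    have h2 : coeff N g
        = coeff N ((trunc (N + 1) g : Polynomial R) : PowerSeries R) := by
      conv_lhs => rw [hg]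
      rw [map_add, coeff_zero_of_X_pow_dvd (Nat.lt_succ_self N) (dvd_mul_right _ _), add_zero]
    rw [h1, h2]
  -- finiteness of gaussVal t
  have hfin : gaussVal π t ≠ ⊤ := by
    obtain ⟨i, hi⟩ : ∃ i, coeff i t ≠ 0 := by
      by_contra hall
      push_neg at hall
      exact htne (PowerSeries.ext fun i => by rw [hall i, map_zero])
    intro htop
    have h1 := gaussVal_le_emult π t i
    rw [htop, top_le_iff] at h1
    exact finiteMultiplicity_iff_emultiplicity_ne_top.1 (FiniteMultiplicity.of_not_isUnit hπ.not_isUnit hi) h1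
  have hmn : ((gaussVal π t).toNat : ℕ∞) = gaussVal π t := ENat.coe_toNat hfin
  set mn := (gaussVal π t).toNat
  have ht : ∀ i, π ^ mn ∣ coeff i t := (le_gaussVal_iff π t mn).mp hmn.le
  have hm1 : 1 ≤ mn := by
    have hpos := hin
    rw [← hmn] at hpos
    have : 0 < mn := by exact_mod_cast hpos
    omega
  obtain ⟨i₀, hi₀⟩ : ∃ i₀, ¬ π ^ (mn + 1) ∣ coeff i₀ t := by
    by_contra hall
    push_neg at hall
    have h1 := (le_gaussVal_iff π t (mn + 1)).mpr hall
    rw [← hmn] at h1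
    have : mn + 1 ≤ mn := by exact_mod_cast h1
    omega
  have hkey : ∀ N, π ^ (mn + 1) ∣ coeff N (σ f - f - t * PowerSeries.derivative R f) :=
    key_dvd π σ hm1 ht f
  have hdecomp : ∀ i : ℕ, coeff i (σ f - f)
      = coeff i (σ f - f - t * PowerSeries.derivative R f)
        + coeff i (t * PowerSeries.derivative R f) := by
    intro i
    rw [← map_add]
    congr 1
    ring
  have hge : ∀ i, π ^ mn ∣ coeff i (σ f - f) := by
    intro i
    rw [hdecomp i]
    exact dvd_add ((pow_dvd_pow π (Nat.le_succ mn)).trans (hkey i))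
      (coeff_mul_dvd_left ht _ i)
  have hge' : (mn : ℕ∞) ≤ gaussVal π (σ f - f) := (le_gaussVal_iff π _ mn).mpr hge
  have hineq : gaussVal π t ≤ gaussVal π (σ f - f) := by rw [← hmn]; exact hge'
  refine ⟨hineq, ?_⟩
  have hder : PowerSeries.derivative (R ⧸ Ideal.span {π}) (redMod π f)
      = redMod π (PowerSeries.derivative R f) := derivative_redMod π f
  constructor
  · intro heq
    intro hzero
    have hred : redMod π (PowerSeries.derivative R f) = 0 := by rw [← hder]; exact hzero
    have hπdf : ∀ i, π ∣ coeff i (PowerSeries.derivative R f) :=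
      (redMod_eq_zero_iff π _).mp hred
    have h1 : ∀ i, π ^ (mn + 1) ∣ coeff i (t * PowerSeries.derivative R f) := fun i => by
      rw [pow_succ]
      exact coeff_mul_dvd ht hπdf i
    have h2 : ∀ i, π ^ (mn + 1) ∣ coeff i (σ f - f) := fun i => by
      rw [hdecomp i]
      exact dvd_add (hkey i) (h1 i)
    have h3 := (le_gaussVal_iff π _ (mn + 1)).mpr h2
    rw [heq, ← hmn] at h3
    have : mn + 1 ≤ mn := by exact_mod_cast h3
    omega
  · intro hder0
    have hdfred : redMod π (PowerSeries.derivative R f) ≠ 0 := by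
      rw [← hder]; exact hder0
    choose c hc using ht
    set t₀ : PowerSeries R := PowerSeries.mk c with ht₀
    have htfact : t = PowerSeries.C (π ^ mn) * t₀ := by
      ext i
      rw [coeff_C_mul, ht₀, coeff_mk, ← hc i]
    have ht₀red : redMod π t₀ ≠ 0 := by
      intro hall
      apply hi₀
      have hπc : π ∣ c i₀ := by
        have := (redMod_eq_zero_iff π t₀).mp hall i₀
        rwa [ht₀, coeff_mk] at this
      rw [hc i₀, pow_succ]
      exact mul_dvd_mul_left _ hπc
    have hprod : redMod π (t₀ * PowerSeries.derivative R f) ≠ 0 := by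
      rw [map_mul]
      exact mul_ne_zero ht₀red hdfred
    obtain ⟨N₀, hN₀⟩ : ∃ N₀, ¬ π ∣ coeff N₀ (t₀ * PowerSeries.derivative R f) := by
      by_contra hall
      push_neg at hall
      exact hprod ((redMod_eq_zero_iff π _).mpr hall)
    have hc1 : coeff N₀ (t * PowerSeries.derivative R f)
        = π ^ mn * coeff N₀ (t₀ * PowerSeries.derivative R f) := by
      rw [htfact, mul_assoc, coeff_C_mul]
    have hnot : ¬ π ^ (mn + 1) ∣ coeff N₀ (σ f - f) := by
      intro hd
      have htd : π ^ (mn + 1) ∣ coeff N₀ (t * PowerSeries.derivative R f) := by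
        have he : coeff N₀ (t * PowerSeries.derivative R f)
            = coeff N₀ (σ f - f)
              - coeff N₀ (σ f - f - t * PowerSeries.derivative R f) := by
          rw [hdecomp N₀]; ring
        rw [he]
        exact dvd_sub hd (hkey N₀)
      rw [hc1, pow_succ] at htd
      exact hN₀ ((mul_dvd_mul_iff_left (pow_ne_zero mn hprime.ne_zero)).mp htd)
    have h2 : emultiplicity π (coeff N₀ (σ f - f)) < ((mn + 1 : ℕ) : ℕ∞) :=
      emultiplicity_lt_iff_not_dvd.mpr hnot
    have h3 : emultiplicity π (coeff N₀ (σ f - f)) ≤ (mn : ℕ∞) := by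
      have he : (((emultiplicity π (coeff N₀ (σ f - f))).toNat : ℕ) : ℕ∞)
          = emultiplicity π (coeff N₀ (σ f - f)) := ENat.coe_toNat (ne_top_of_lt h2)
      set e := (emultiplicity π (coeff N₀ (σ f - f))).toNat
      rw [← he] at h2 ⊢
      have h2' : e < mn + 1 := by exact_mod_cast h2
      exact_mod_cast Nat.lt_succ_iff.mp h2'
    have hle : gaussVal π (σ f - f) ≤ (mn : ℕ∞) := (gaussVal_le_emult π _ N₀).trans h3
    rw [← hmn]
    exact le_antisymm hle hge'
end

section
/- In the setting above, δ_Y^G is a nonnegative virtual character: ⟨ψ, δ_Y^G⟩ ≥ 0 for every character ψ of a complex representation of G. -/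
open PowerSeries Finset

open Classical in
/-- The depth character `δ_Y^G`, built from the function
`σ ↦ val_Y(σ(z) - z) = vq σ`: `δ(σ) = -|G|·vq σ` for `σ ≠ 1` and
`δ(1) = -Σ_{σ≠1} δ(σ)`. -/
noncomputable def deltaY {G : Type*} [Group G] [Fintype G] (vq : G → ℕ) : G → ℂ :=
  fun σ => if σ = 1 then ∑ τ ∈ Finset.univ.erase (1 : G), (Fintype.card G : ℂ) * vq τ
           else -(Fintype.card G : ℂ) * vq σ

section Val
variable {R : Type*} [CommRing R] (π : R)

lemma le_gaussVal_iff (f : PowerSeries R) (n : ℕ) :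
    (n : ℕ∞) ≤ gaussVal π f ↔ ∀ i, π ^ n ∣ PowerSeries.coeff i f := by
  simp only [gaussVal, le_iInf_iff, pow_dvd_iff_le_emultiplicity]

lemma gaussVal_dvd_iff (f : PowerSeries R) (n : ℕ) :
    (∀ i, π ^ n ∣ PowerSeries.coeff i f) ↔ (PowerSeries.C (π ^ n)) ∣ f := by
  constructor
  · intro h
    refine ⟨PowerSeries.mk fun i => (h i).choose, ?_⟩
    ext i
    rw [PowerSeries.coeff_C_mul, PowerSeries.coeff_mk]
    exact (h i).choose_spec
  · rintro ⟨g, rfl⟩ i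
    rw [PowerSeries.coeff_C_mul]
    exact Dvd.intro _ rfl

lemma enat_le_of_forall {a b : ℕ∞} (h : ∀ n : ℕ, (n : ℕ∞) ≤ a → (n : ℕ∞) ≤ b) : a ≤ b := by
  cases a with
  | top =>
    cases b with
    | top => exact le_rfl
    | coe m =>
      have := h (m + 1) le_top
      exact absurd (Nat.cast_le.mp this) (by omega)
  | coe n => exact h n le_rfl

lemma gaussVal_apply (e : PowerSeries R ≃ₐ[R] PowerSeries R) (f : PowerSeries R) :
    gaussVal π (e f) = gaussVal π f := by
  have key : ∀ (e : PowerSeries R ≃ₐ[R] PowerSeries R) (f : PowerSeries R),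
      gaussVal π f ≤ gaussVal π (e f) := by
    intro e f
    refine enat_le_of_forall fun n hn => ?_
    rw [le_gaussVal_iff, gaussVal_dvd_iff] at hn ⊢
    obtain ⟨g, hg⟩ := hn
    refine ⟨e g, ?_⟩
    have : PowerSeries.C (π ^ n) = algebraMap R (PowerSeries R) (π ^ n) := rfl
    rw [hg, map_mul, this, AlgEquiv.commutes]
  refine le_antisymm ?_ (key e f)
  have := key e.symm (e f)
  simpa using this

lemma gaussVal_neg (f : PowerSeries R) : gaussVal π (-f) = gaussVal π f := by
  simp [gaussVal, emultiplicity_neg]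

lemma min_le_gaussVal_add (f g : PowerSeries R) :
    min (gaussVal π f) (gaussVal π g) ≤ gaussVal π (f + g) := by
  refine le_iInf fun i => ?_
  rw [map_add]
  refine le_trans ?_ min_le_emultiplicity_add
  exact min_le_min (iInf_le _ i) (iInf_le _ i)

end Val

open Classical in
lemma sum_char_sub {G : Type} [Group G] [Fintype G] (H : Subgroup G) (V : FDRep ℂ G) :
    ∃ q : ℝ, 0 ≤ q ∧ ∑ h : H, (V.character 1 - V.character ↑h) = (q : ℂ) := by
  set ρH : Representation ℂ H V := V.ρ.comp H.subtype with hρH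
  set W : FDRep ℂ H := FDRep.of ρH with hW
  have hinv : Invertible ((Fintype.card H : ℂ)) :=
    invertibleOfNonzero (Nat.cast_ne_zero.mpr Fintype.card_ne_zero)
  have havg := FDRep.average_char_eq_finrank_invariants W
  have hchar : ∀ h : H, W.character h = V.character ↑h := fun h => rfl
  have hsum : ∑ h : H, V.character ↑h
      = (Fintype.card H : ℂ) * (Module.finrank ℂ (Representation.invariants W.ρ) : ℂ) := by
    rw [← havg]
    simp only [hchar]
    rw [Nat.card_eq_fintype_card, ← mul_assoc, mul_inv_cancel₀ (Nat.cast_ne_zero.mpr Fintype.card_ne_zero), one_mul]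
  have hle : Module.finrank ℂ (Representation.invariants W.ρ) ≤ Module.finrank ℂ V :=
    Submodule.finrank_le _
  refine ⟨(Fintype.card H : ℝ) * ((Module.finrank ℂ V : ℝ) -
    (Module.finrank ℂ (Representation.invariants W.ρ) : ℝ)), ?_, ?_⟩
  · apply mul_nonneg (by positivity)
    simp only [sub_nonneg, Nat.cast_le]
    exact hle
  · rw [Finset.sum_sub_distrib, Finset.sum_const, hsum, FDRep.char_one]
    rw [Finset.card_univ]
    push_cast
    ring

/-- The depth character `δ_Y^G` is a nonnegative virtual character: `⟨ψ, δ_Y^G⟩ ≥ 0` for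
every character `ψ` of a finite-dimensional complex representation of `G`. -/
theorem stmt6 (R : Type*) [CommRing R] [IsDomain R] [IsDiscreteValuationRing R]
    [CharZero R] (π : R) (hπ : Irreducible π)
    [IsAdicComplete (Ideal.span {π}) R]
    (p : ℕ) (hp : p.Prime) (hchar : CharP (R ⧸ Ideal.span {π}) p)
    (G : Type) [Group G] [Fintype G]
    (φ : G →* (PowerSeries R ≃ₐ[R] PowerSeries R)) (hφ : Function.Injective φ)
    (vq : G → ℕ)
    (hvq : ∀ σ : G, σ ≠ 1 → (vq σ : ℕ∞) = gaussVal π (φ σ PowerSeries.X - PowerSeries.X))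
    (V : FDRep ℂ G) :
    ∃ q : ℝ, 0 ≤ q ∧ innerCF V.character (deltaY vq) = (q : ℂ) := by
  classical
  -- basic facts about vq
  have hinv : ∀ σ : G, σ ≠ 1 → vq σ⁻¹ = vq σ := by
    intro σ hσ
    have hσ' : σ⁻¹ ≠ 1 := inv_ne_one.mpr hσ
    have key : (vq σ⁻¹ : ℕ∞) = (vq σ : ℕ∞) := by
      rw [hvq _ hσ', hvq _ hσ]
      have hdec : φ σ⁻¹ PowerSeries.X - PowerSeries.X
          = -((φ σ⁻¹) (φ σ PowerSeries.X - PowerSeries.X)) := by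
        rw [map_sub]
        have : (φ σ⁻¹) (φ σ PowerSeries.X) = PowerSeries.X := by
          rw [← AlgEquiv.mul_apply, ← map_mul, inv_mul_cancel, map_one, AlgEquiv.one_apply]
        rw [this]
        ring
      rw [hdec, gaussVal_neg, gaussVal_apply]
    exact_mod_cast key
  have hmul : ∀ σ τ : G, σ ≠ 1 → τ ≠ 1 → σ * τ ≠ 1 →
      min (vq σ) (vq τ) ≤ vq (σ * τ) := by
    intro σ τ hσ hτ hστ
    have main : (vq τ : ℕ∞) ⊓ (vq σ : ℕ∞) ≤ (vq (σ * τ) : ℕ∞) := by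
      rw [hvq _ hστ]
      have hdec : φ (σ * τ) PowerSeries.X - PowerSeries.X
          = (φ σ) (φ τ PowerSeries.X - PowerSeries.X)
            + (φ σ PowerSeries.X - PowerSeries.X) := by
        rw [map_mul, AlgEquiv.mul_apply, map_sub]
        ring
      rw [hdec]
      refine le_trans ?_ (min_le_gaussVal_add π _ _)
      rw [gaussVal_apply, ← hvq _ hτ, ← hvq _ hσ]
    rcases le_total (vq σ) (vq τ) with h | h
    · have := le_trans (le_inf (Nat.cast_le.mpr h) le_rfl) main
      rw [min_eq_left h]
      exact Nat.cast_le.mp this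
    · have := le_trans (le_inf le_rfl (Nat.cast_le.mpr h)) main
      rw [min_eq_right h]
      exact Nat.cast_le.mp this
  -- the "ramification" subgroups
  set Hg : ℕ → Subgroup G := fun j =>
    { carrier := {σ | σ = 1 ∨ j ≤ vq σ}
      one_mem' := Or.inl rfl
      mul_mem' := by
        rintro σ τ (rfl | hσ) (rfl | hτ)
        · exact Or.inl (one_mul 1)
        · simpa using Or.inr hτ
        · simpa using Or.inr hσ
        · by_cases h : σ * τ = 1
          · exact Or.inl h
          · refine Or.inr ?_
            by_cases hσ1 : σ = 1
            · subst hσ1; simpa using hτ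
            · by_cases hτ1 : τ = 1
              · subst hτ1; simpa using hσ
              · exact le_trans (le_min hσ hτ) (hmul σ τ hσ1 hτ1 h)
      inv_mem' := by
        rintro σ (rfl | hσ)
        · exact Or.inl inv_one
        · by_cases hσ1 : σ = 1
          · subst hσ1; exact Or.inl inv_one
          · exact Or.inr (le_of_le_of_eq hσ (hinv σ hσ1).symm) } with hHg
  have hmem : ∀ (j : ℕ) (σ : G), σ ∈ Hg j ↔ (σ = 1 ∨ j ≤ vq σ) := fun _ _ => Iff.rfl
  set E := Finset.univ.erase (1 : G) with hE
  set N := Finset.univ.sup vq with hN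
  set c : G → ℂ := fun σ =>
    (starRingEnd ℂ) (V.character 1) - (starRingEnd ℂ) (V.character σ) with hc
  have hcard : (Fintype.card G : ℂ) ≠ 0 := Nat.cast_ne_zero.mpr Fintype.card_ne_zero
  have hδ1 : deltaY vq 1 = ∑ τ ∈ E, (Fintype.card G : ℂ) * vq τ := if_pos rfl
  have hδ : ∀ σ : G, σ ≠ 1 → deltaY vq σ = -(Fintype.card G : ℂ) * vq σ :=
    fun σ h => if_neg h
  -- step 1
  have step1 : innerCF V.character (deltaY vq) = ∑ σ ∈ E, (vq σ : ℂ) * c σ := by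
    rw [innerCF]
    rw [← Finset.add_sum_erase _ _ (Finset.mem_univ (1 : G)), hδ1]
    have e1 : ∑ σ ∈ E, (starRingEnd ℂ) (V.character σ) * deltaY vq σ
        = ∑ σ ∈ E, (starRingEnd ℂ) (V.character σ) * (-(Fintype.card G : ℂ) * vq σ) :=
      Finset.sum_congr rfl fun σ hσ => by rw [hδ σ (Finset.mem_erase.mp hσ).1]
    rw [e1, Finset.mul_sum, ← Finset.sum_add_distrib]
    have e3 : ∑ σ ∈ E, ((starRingEnd ℂ) (V.character 1) * ((Fintype.card G : ℂ) * vq σ)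
        + (starRingEnd ℂ) (V.character σ) * (-(Fintype.card G : ℂ) * vq σ))
        = (Fintype.card G : ℂ) * ∑ σ ∈ E, (vq σ : ℂ) * c σ := by
      rw [Finset.mul_sum]
      refine Finset.sum_congr rfl fun σ _ => ?_
      simp only [hc]
      ring
    rw [e3, ← mul_assoc, inv_mul_cancel₀ hcard, one_mul]
  -- step 2 : expand vq σ as a sum of indicators
  have step2 : ∀ σ ∈ E, (vq σ : ℂ) = ∑ j ∈ Finset.Icc 1 N, if j ≤ vq σ then (1 : ℂ) else 0 := by
    intro σ _
    have hσN : vq σ ≤ N := Finset.le_sup (Finset.mem_univ σ)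
    rw [Finset.sum_boole]
    have : (Finset.Icc 1 N).filter (fun j => j ≤ vq σ) = Finset.Icc 1 (vq σ) := by
      ext j
      simp only [Finset.mem_filter, Finset.mem_Icc]
      omega
    rw [this, Nat.card_Icc]
    simp
  -- swap the two sums
  have step3 : ∑ σ ∈ E, (vq σ : ℂ) * c σ
      = ∑ j ∈ Finset.Icc 1 N, ∑ σ ∈ E, (if j ≤ vq σ then c σ else 0) := by
    rw [Finset.sum_congr rfl fun σ hσ => by rw [step2 σ hσ, Finset.sum_mul]]
    rw [Finset.sum_comm]
    refine Finset.sum_congr rfl fun j _ => Finset.sum_congr rfl fun σ _ => ?_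
    by_cases h : j ≤ vq σ <;> simp [h]
  -- each inner sum is a sum over a subgroup
  have step4 : ∀ j ∈ Finset.Icc 1 N,
      ∑ σ ∈ E, (if j ≤ vq σ then c σ else 0) = ∑ h : Hg j, c ↑h := by
    intro j hj
    have hj1 : 1 ≤ j := (Finset.mem_Icc.mp hj).1
    have h1 : ∑ σ ∈ E, (if j ≤ vq σ then c σ else 0)
        = ∑ σ : G, (if j ≤ vq σ then c σ else 0) := by
      rw [hE]
      refine Finset.sum_erase _ ?_
      have : c (1 : G) = 0 := sub_self _
      rw [this, ite_self]
    rw [h1]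
    have h2 : ∀ σ : G, (if j ≤ vq σ then c σ else 0) = (if σ ∈ Hg j then c σ else 0) := by
      intro σ
      by_cases hσ1 : σ = 1
      · subst hσ1
        have : c (1 : G) = 0 := sub_self _
        rw [this, ite_self, ite_self]
      · refine if_congr ?_ rfl rfl
        rw [hmem]
        constructor
        · exact Or.inr
        · rintro (rfl | h)
          · exact absurd rfl hσ1
          · exact h
    rw [Finset.sum_congr rfl fun σ _ => h2 σ, ← Finset.sum_filter]
    exact Finset.sum_subtype _ (by simp) c
  -- conclude using the character-theoretic fact
  choose qf hq0 hqe using fun j => sum_char_sub (Hg j) V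
  have hfinal : ∀ j : ℕ, ∑ h : Hg j, c ↑h = ((qf j : ℝ) : ℂ) := by
    intro j
    have : ∑ h : Hg j, c ↑h = (starRingEnd ℂ) (∑ h : Hg j, (V.character 1 - V.character ↑h)) := by
      rw [map_sum]
      exact Finset.sum_congr rfl fun h _ => by simp [hc]
    rw [this, hqe j]
    simp
  refine ⟨∑ j ∈ Finset.Icc 1 N, qf j, Finset.sum_nonneg fun j _ => hq0 j, ?_⟩
  rw [step1, step3, Finset.sum_congr rfl step4,
    Finset.sum_congr rfl fun j (_ : j ∈ Finset.Icc 1 N) => hfinal j]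
  norm_cast
end

section
/- Let K be a complete discretely valued field of characteristic 0 with algebraically closed residue field of characteristic p, let σ be a K-automorphism of finite order of the open disk Y = (Spf R[[z]]) ⊗ K with σ ≠ id. Then every fixed point of σ in Y(K̄) is simple, i.e., every zero of the power series σ(z) - z ∈ R[[z]] is a simple zero. -/
open PowerSeries

namespace Stmt7Aux

section Vspace

variable {R' : Type*} [CommRing R'] (ϖ : R')

/-- `g` has coefficient `j` divisible by `ϖ^(N - j*w)` for all `j`. -/
def inV (w N : ℕ) (g : PowerSeries R') : Prop :=
  ∀ j, ϖ ^ (N - j * w) ∣ PowerSeries.coeff j g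

variable {ϖ}

theorem inV_zero {w N : ℕ} : inV ϖ w N (0 : PowerSeries R') := by
  intro j; simp

theorem inV_mono {w N N' : ℕ} (h : N' ≤ N) {g : PowerSeries R'} (hg : inV ϖ w N g) :
    inV ϖ w N' g := fun j =>
  (pow_dvd_pow ϖ (Nat.sub_le_sub_right h _)).trans (hg j)

theorem inV_wmono {w w' N : ℕ} (h : w ≤ w') {g : PowerSeries R'} (hg : inV ϖ w N g) :
    inV ϖ w' N g := fun j =>
  (pow_dvd_pow ϖ (by have := Nat.mul_le_mul_left j h; omega)).trans (hg j)

theorem inV_add {w N : ℕ} {g h : PowerSeries R'} (hg : inV ϖ w N g) (hh : inV ϖ w N h) :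
    inV ϖ w N (g + h) := fun j => by
  rw [map_add]; exact dvd_add (hg j) (hh j)

theorem inV_neg {w N : ℕ} {g : PowerSeries R'} (hg : inV ϖ w N g) : inV ϖ w N (-g) :=
  fun j => by rw [map_neg]; exact (hg j).neg_right

theorem inV_mul {w A B : ℕ} {g h : PowerSeries R'} (hg : inV ϖ w A g) (hh : inV ϖ w B h) :
    inV ϖ w (A + B) (g * h) := by
  intro j
  rw [PowerSeries.coeff_mul]
  refine Finset.dvd_sum fun p hp => ?_
  rw [Finset.HasAntidiagonal.mem_antidiagonal] at hp
  have h1 : (A + B) - j * w ≤ (A - p.1 * w) + (B - p.2 * w) := by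
    have : p.1 * w + p.2 * w = j * w := by rw [← add_mul, hp]
    omega
  exact (pow_dvd_pow ϖ h1).trans (by rw [pow_add]; exact mul_dvd_mul (hg p.1) (hh p.2))

theorem inV_mul_left {w N : ℕ} (c : PowerSeries R') {g : PowerSeries R'} (hg : inV ϖ w N g) :
    inV ϖ w N (c * g) := by
  intro j
  rw [PowerSeries.coeff_mul]
  refine Finset.dvd_sum fun p hp => ?_
  rw [Finset.HasAntidiagonal.mem_antidiagonal] at hp
  refine Dvd.dvd.mul_left ((pow_dvd_pow ϖ ?_).trans (hg p.2)) _
  have : p.2 * w ≤ j * w := Nat.mul_le_mul_right w (by omega)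
  omega

theorem inV_mul_right {w N : ℕ} (c : PowerSeries R') {g : PowerSeries R'} (hg : inV ϖ w N g) :
    inV ϖ w N (g * c) := by
  rw [mul_comm]; exact inV_mul_left c hg

theorem inV_pow {w : ℕ} {g : PowerSeries R'} (hg : inV ϖ w 1 g) (N : ℕ) :
    inV ϖ w N (g ^ N) := by
  induction N with
  | zero => intro j; simp
  | succ n ih => rw [pow_succ]; exact inV_mul ih hg

theorem inV_of_coeff_eq_zero {w N : ℕ} (hw : 1 ≤ w) {g : PowerSeries R'}
    (h : ∀ j < N, PowerSeries.coeff j g = 0) : inV ϖ w N g := by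
  intro j
  rcases lt_or_ge j N with hj | hj
  · rw [h j hj]; exact dvd_zero _
  · have h2 : j ≤ j * w := Nat.le_mul_of_pos_right j hw
    have : N - j * w = 0 := by omega
    simp [this]


end Vspace


section TChar

variable {R' : Type*} [CommRing R'] (y : R')

/-- partial sums `∑_{k ≤ i} g_k y^k`. -/
noncomputable def Ssum (g : PowerSeries R') (i : ℕ) : R' :=
  ∑ k ∈ Finset.range (i + 1), PowerSeries.coeff k g * y ^ k

variable {y}

theorem coeff_zero_t_mul (h : PowerSeries R') :
    PowerSeries.coeff 0 ((X - C y) * h) = -(y * PowerSeries.coeff 0 h) := by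
  simp [sub_mul, PowerSeries.coeff_C_mul, PowerSeries.coeff_zero_eq_constantCoeff]

theorem coeff_succ_t_mul (h : PowerSeries R') (j : ℕ) :
    PowerSeries.coeff (j + 1) ((X - C y) * h) =
      PowerSeries.coeff j h - y * PowerSeries.coeff (j + 1) h := by
  simp [sub_mul, PowerSeries.coeff_C_mul, PowerSeries.coeff_succ_X_mul]

theorem Ssum_t_mul (h : PowerSeries R') (i : ℕ) :
    Ssum y ((X - C y) * h) i = -(y ^ (i + 1) * PowerSeries.coeff i h) := by
  induction i with
  | zero => simp [Ssum, coeff_zero_t_mul]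
  | succ n ih =>
      rw [Ssum, Finset.sum_range_succ, ← Ssum, ih, coeff_succ_t_mul]
      ring

theorem Ssum_add (g h : PowerSeries R') (i : ℕ) :
    Ssum y (g + h) i = Ssum y g i + Ssum y h i := by
  simp [Ssum, Finset.sum_add_distrib, add_mul]

theorem Ssum_C_mul (r : R') (g : PowerSeries R') (i : ℕ) :
    Ssum y (C r * g) i = r * Ssum y g i := by
  simp [Ssum, PowerSeries.coeff_C_mul, Finset.mul_sum, mul_assoc]

theorem t_dvd_of_Ssum [IsDomain R'] (hy : y ≠ 0) {g : PowerSeries R'}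
    (h : ∀ i, y ^ (i + 1) ∣ Ssum y g i) : (X - C y) ∣ g := by
  choose c hc using h
  refine ⟨PowerSeries.mk fun i => -(c i), ?_⟩
  ext j
  cases j with
  | zero =>
      rw [coeff_zero_t_mul]
      have h0 : PowerSeries.coeff 0 g = y * c 0 := by
        simpa [Ssum] using hc 0
      simp only [PowerSeries.coeff_mk, mul_neg, neg_neg]
      simpa using h0
  | succ j =>
      rw [coeff_succ_t_mul]
      have h1 := hc (j + 1)
      rw [Ssum, Finset.sum_range_succ, ← Ssum, hc j] at h1
      have hcan : y ^ (j + 1) * (y * c (j + 1)) =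
          y ^ (j + 1) * (c j + PowerSeries.coeff (j + 1) g) := by
        rw [mul_add]
        calc y ^ (j + 1) * (y * c (j + 1)) = y ^ (j + 1 + 1) * c (j + 1) := by ring
        _ = _ := by rw [← h1]; ring
      have hkey := mul_left_cancel₀ (pow_ne_zero (j + 1) hy) hcan
      simp only [PowerSeries.coeff_mk]
      linear_combination -hkey

end TChar

section DVRHelp

variable {R' : Type*} [CommRing R'] [IsDomain R'] {ϖ : R'}

theorem cancel_unit_pow (hϖ : Irreducible ϖ) {v x : R'} (hv : IsUnit v) {M e : ℕ}
    (h : ϖ ^ M ∣ v * ϖ ^ e * x) : ϖ ^ (M - e) ∣ x := by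
  rcases le_or_gt M e with hMe | hMe
  · simp [Nat.sub_eq_zero_of_le hMe]
  · have h2 : ϖ ^ e * ϖ ^ (M - e) ∣ ϖ ^ e * (v * x) := by
      rw [← pow_add]
      have : e + (M - e) = M := by omega
      rw [this]
      refine h.trans ?_
      rw [show v * ϖ ^ e * x = ϖ ^ e * (v * x) from by ring]
    have h3 : ϖ ^ (M - e) ∣ v * x :=
      (mul_dvd_mul_iff_left (pow_ne_zero e hϖ.ne_zero)).mp h2
    exact (hv.dvd_mul_left).mp h3

theorem unit_pow_dvd_iff (hϖ : Irreducible ϖ) {v : R'} (hv : IsUnit v) {a b : ℕ} :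
    ϖ ^ b ∣ v * ϖ ^ a ↔ b ≤ a := by
  constructor
  · intro h
    by_contra hab
    have h2 : ϖ ^ (b - a) ∣ 1 := by
      have := cancel_unit_pow hϖ hv (x := (1:R')) (by simpa using h)
      simpa using this
    have : IsUnit ϖ := by
      have hba : 1 ≤ b - a := by omega
      exact isUnit_of_dvd_one ((dvd_pow_self ϖ (by omega : b - a ≠ 0)).trans h2)
    exact hϖ.not_isUnit this
  · intro h
    exact Dvd.dvd.mul_left (pow_dvd_pow ϖ h) v

theorem unit_pow_dvd_unit_pow_iff (hϖ : Irreducible ϖ) {v u : R'} (hv : IsUnit v)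
    (hu : IsUnit u) {b c : ℕ} : v * ϖ ^ b ∣ u * ϖ ^ c ↔ b ≤ c := by
  constructor
  · intro h
    exact (unit_pow_dvd_iff hϖ hu).mp ((Dvd.intro_left v rfl).trans h)
  · intro h
    obtain ⟨vu, rfl⟩ := hv
    refine ⟨u * ϖ ^ (c - b) * ((vu⁻¹ : R'ˣ) : R'), ?_⟩
    have : (vu : R') * ((vu⁻¹ : R'ˣ) : R') = 1 := Units.mul_inv vu
    calc u * ϖ ^ c = (↑vu * ((vu⁻¹ : R'ˣ) : R')) * (u * (ϖ ^ b * ϖ ^ (c - b))) := by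
          rw [this, one_mul, ← pow_add]
          congr 2
          omega
    _ = ↑vu * ϖ ^ b * (u * ϖ ^ (c - b) * ((vu⁻¹ : R'ˣ) : R')) := by ring

theorem eq_zero_of_forall_pow_dvd [IsDiscreteValuationRing R'] (hϖ : Irreducible ϖ) {c : R'}
    (h : ∀ M, ϖ ^ M ∣ c) : c = 0 := by
  by_contra hc
  obtain ⟨a, u, rfl⟩ := IsDiscreteValuationRing.eq_unit_mul_pow_irreducible hc hϖ
  have := (unit_pow_dvd_iff hϖ u.isUnit).mp (h (a + 1))
  omega

end DVRHelp



section Div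

variable {R' : Type*} [CommRing R'] [IsDomain R'] {ϖ : R'} {y : R'} {d : ℕ}

/-- `d` is the valuation of `y`, or `y = 0` and `d = 1`. -/
def ValData (ϖ y : R') (d : ℕ) : Prop := (y = 0 ∧ d = 1) ∨ ∃ v : R', IsUnit v ∧ y = v * ϖ ^ d

theorem inV_of_t_mul (hϖ : Irreducible ϖ) (hyd : ValData ϖ y d) {w N : ℕ} (z : PowerSeries R')
    (h : inV ϖ w N ((X - C y) * z)) : inV ϖ (w + d) (N - w - d) z := by
  rcases hyd with ⟨hy0, -⟩ | ⟨v, hv, hyv⟩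
  · -- y = 0 : coefficients just shift
    intro j
    have h2 := h (j + 1)
    rw [coeff_succ_t_mul, hy0, zero_mul, sub_zero] at h2
    refine (pow_dvd_pow ϖ ?_).trans h2
    have e1 : (j+1) * w = j * w + w := by ring
    have e2 : j * (w + d) = j * w + j * d := by ring
    omega
  · -- y = v * ϖ ^ d
    intro j
    induction j with
    | zero =>
        have h0 := h 0
        rw [coeff_zero_t_mul, dvd_neg, hyv] at h0
        have := cancel_unit_pow hϖ hv h0
        refine (pow_dvd_pow ϖ ?_).trans this
        omega
    | succ j ih =>
        have hj1 := h (j + 1)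
        rw [coeff_succ_t_mul] at hj1
        -- ϖ ^ γ ∣ y * z_{j+1} with γ = min (N-w-d-j(w+d)) (N-(j+1)w)
        set α := N - w - d - j * (w + d) with hα
        set β := N - (j + 1) * w with hβ
        have hdiv : ϖ ^ min α β ∣ y * PowerSeries.coeff (j + 1) z := by
          have h1 : ϖ ^ min α β ∣ PowerSeries.coeff j z :=
            (pow_dvd_pow ϖ (min_le_left _ _)).trans ih
          have h2 : ϖ ^ min α β ∣ PowerSeries.coeff j z -
              y * PowerSeries.coeff (j + 1) z :=
            (pow_dvd_pow ϖ (min_le_right _ _)).trans hj1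
          have := dvd_sub h1 h2
          simpa using this
        rw [hyv] at hdiv
        have hcan := cancel_unit_pow hϖ hv hdiv
        refine (pow_dvd_pow ϖ ?_).trans hcan
        have e2 : (j+1) * (w + d) = j * (w+d) + w + d := by ring
        have e3 : (j+1) * w = j * w + w := by ring
        have e4 : j * (w + d) = j * w + j * d := by ring
        omega

theorem inV_of_t_pow_mul (hϖ : Irreducible ϖ) (hyd : ValData ϖ y d) (m : ℕ) {w : ℕ}
    (hw : 1 ≤ w) : ∃ w' C₀ : ℕ, 1 ≤ w' ∧ ∀ N (z : PowerSeries R'),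
      inV ϖ w N ((X - C y) ^ m * z) → inV ϖ w' (N - C₀) z := by
  induction m with
  | zero =>
      exact ⟨w, 0, hw, fun N z h => by simpa using h⟩
  | succ m ih =>
      obtain ⟨w', C₀, hw', hIH⟩ := ih
      refine ⟨w' + d, C₀ + w' + d, by omega, fun N z h => ?_⟩
      have h1 : inV ϖ w (N) ((X - C y) ^ m * ((X - C y) * z)) := by
        rw [← mul_assoc, ← pow_succ]; exact h
      have h2 := hIH N _ h1
      have h3 := inV_of_t_mul hϖ hyd z h2
      refine inV_mono ?_ h3
      omega

end Div

section Expand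

variable {A : Type*} [CommRing A]

theorem coeff_Psum (G : PowerSeries A) (N j : ℕ) :
    PowerSeries.coeff j (∑ i ∈ Finset.range N, C (PowerSeries.coeff i G) * X ^ i) =
      if j < N then PowerSeries.coeff j G else 0 := by
  rw [map_sum]
  simp only [PowerSeries.coeff_C_mul_X_pow]
  rcases lt_or_ge j N with hj | hj
  · rw [Finset.sum_eq_single j (fun b _ hb => by simp [Ne.symm hb]) (by intro hj'; simp at hj'; omega),
      if_pos rfl, if_pos hj]
  · rw [if_neg (by omega), Finset.sum_eq_zero]
    intro i hi
    rw [Finset.mem_range] at hi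
    rw [if_neg (by omega)]

theorem exists_tail (g : PowerSeries A) (N : ℕ) :
    ∃ h, g = (∑ i ∈ Finset.range N, C (PowerSeries.coeff i g) * X ^ i) + X ^ N * h := by
  have hdvd : (X : PowerSeries A) ^ N ∣
      g - ∑ i ∈ Finset.range N, C (PowerSeries.coeff i g) * X ^ i := by
    rw [PowerSeries.X_pow_dvd_iff]
    intro m hm
    rw [map_sub, coeff_Psum, if_pos hm, sub_self]
  obtain ⟨h, hh⟩ := hdvd
  exact ⟨h, by linear_combination hh⟩

/-- Taylor-type expansion of powers. -/
theorem pow_taylor (a b : A) (i : ℕ) :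
    ∃ w, a ^ i = b ^ i + (i : A) * b ^ (i - 1) * (a - b) + (a - b) ^ 2 * w := by
  induction i with
  | zero => exact ⟨0, by simp⟩
  | succ i ih =>
      obtain ⟨w, hw⟩ := ih
      cases i with
      | zero => exact ⟨0, by simp⟩
      | succ j =>
          refine ⟨a * w + (j + 1 : A) * b ^ j, ?_⟩
          have hb : b ^ (j + 1 + 1 - 1) = b ^ (j + 1) := rfl
          have hb2 : b ^ (j + 1 - 1) = b ^ j := rfl
          rw [hb]
          rw [hb2] at hw
          have : a ^ (j + 1 + 1) = a * a ^ (j + 1) := by ring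
          rw [this, hw]
          push_cast
          ring

theorem sum_taylor (a b : A) (c : ℕ → A) (N : ℕ) :
    ∃ W, ∑ i ∈ Finset.range N, c i * a ^ i =
      (∑ i ∈ Finset.range N, c i * b ^ i) +
      (∑ i ∈ Finset.range N, (i : A) * c i * b ^ (i - 1)) * (a - b) + (a - b) ^ 2 * W := by
  induction N with
  | zero => exact ⟨0, by simp⟩
  | succ N ih =>
      obtain ⟨W, hW⟩ := ih
      obtain ⟨w, hw⟩ := pow_taylor a b N
      refine ⟨W + c N * w, ?_⟩
      rw [Finset.sum_range_succ, hW, Finset.sum_range_succ, Finset.sum_range_succ, hw]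
      ring

end Expand

section AlgEquivExpand

variable {R : Type*} [CommRing R]

theorem algEquiv_C (τ : PowerSeries R ≃ₐ[R] PowerSeries R) (r : R) : τ (C r) = C r := by
  have := τ.commutes r
  simpa [PowerSeries.algebraMap_apply] using this

/-- Exact expansion of an algebra automorphism applied to `g`, to order `N`. -/
theorem algEquiv_expand (τ : PowerSeries R ≃ₐ[R] PowerSeries R) (g : PowerSeries R) (N : ℕ) :
    ∃ h, τ g = (∑ i ∈ Finset.range N, C (PowerSeries.coeff i g) * (τ X) ^ i) +
      (τ X) ^ N * h := by
  obtain ⟨h₀, hg⟩ := exists_tail g N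
  refine ⟨τ h₀, ?_⟩
  conv_lhs => rw [hg]
  rw [map_add, map_mul, map_pow, map_sum]
  congr 1
  refine Finset.sum_congr rfl fun i _ => ?_
  rw [map_mul, map_pow, algEquiv_C]

theorem algEquiv_eq_id_of_X (σ : PowerSeries R ≃ₐ[R] PowerSeries R) (h : σ X = X) :
    σ = AlgEquiv.refl := by
  ext g : 1
  show σ g = g
  ext j
  obtain ⟨h₁, hexp⟩ := algEquiv_expand σ g (j + 1)
  rw [h] at hexp
  obtain ⟨h₀, hg⟩ := exists_tail g (j + 1)
  rw [hexp]
  conv_rhs => rw [hg]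
  rw [map_add, map_add, PowerSeries.coeff_X_pow_mul', PowerSeries.coeff_X_pow_mul']
  simp

end AlgEquivExpand

section Der

variable {R' : Type*} [CommRing R'] {y : R'}

theorem coeff_derivativeFun_aux (f : PowerSeries R') (n : ℕ) :
    PowerSeries.coeff n (PowerSeries.derivativeFun f) = PowerSeries.coeff (n + 1) f * (n + 1) :=
  PowerSeries.coeff_derivative f n

theorem der_t (y : R') : PowerSeries.derivativeFun ((X : PowerSeries R') - C y) = 1 := by
  ext n
  rw [coeff_derivativeFun_aux]
  cases n with
  | zero => simp
  | succ n => simp [PowerSeries.coeff_X, PowerSeries.coeff_succ_C, PowerSeries.coeff_one]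

theorem der_t_pow (m : ℕ) (u : PowerSeries R') :
    ∃ w, PowerSeries.derivativeFun (((X : PowerSeries R') - C y) ^ (m + 1) * u) =
      ((X : PowerSeries R') - C y) ^ m * w := by
  induction m generalizing u with
  | zero =>
      exact ⟨PowerSeries.derivativeFun (((X : PowerSeries R') - C y) * u), by simp⟩
  | succ m ih =>
      set t := (X : PowerSeries R') - C y with ht
      obtain ⟨w, hw⟩ := ih u
      refine ⟨w + u, ?_⟩
      have h1 : t ^ (m + 1 + 1) * u = t * (t ^ (m + 1) * u) := by ring
      rw [h1, PowerSeries.derivativeFun_mul, hw, der_t, smul_eq_mul, smul_eq_mul]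
      ring

end Der

section Prim

variable {R' : Type*} [CommRing R'] [IsDomain R'] [IsDiscreteValuationRing R'] {ϖ y : R'} {d : ℕ}

theorem Ssum_of_inV {w M : ℕ} {g : PowerSeries R'} (hg : inV ϖ w M g) (i : ℕ) :
    ϖ ^ (M - i * w) ∣ Ssum y g i := by
  refine Finset.dvd_sum fun k hk => ?_
  rw [Finset.mem_range] at hk
  refine Dvd.dvd.mul_right ((pow_dvd_pow ϖ ?_).trans (hg k)) _
  have : k * w ≤ i * w := Nat.mul_le_mul_right w (by omega)
  omega

theorem approx_dvd (hϖ : Irreducible ϖ) (hyd : ValData ϖ y d) {c : R'} (e : ℕ)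
    (h : ∀ M : ℕ, ∃ E, ϖ ^ M ∣ E ∧ y ^ e ∣ c - E) : y ^ e ∣ c := by
  rcases hyd with ⟨hy0, -⟩ | ⟨v, hv, hyv⟩
  · subst hy0
    cases e with
    | zero => simp
    | succ e =>
        have hc0 : c = 0 := by
          refine eq_zero_of_forall_pow_dvd hϖ fun M => ?_
          obtain ⟨E, hE1, hE2⟩ := h M
          rw [zero_pow (by omega), zero_dvd_iff, sub_eq_zero] at hE2
          rwa [hE2]
        simp [hc0, zero_pow]
  · obtain ⟨E, hE1, hE2⟩ := h (e * d)
    have hyE : y ^ e ∣ E := by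
      refine dvd_trans ?_ hE1
      obtain ⟨vu, rfl⟩ := hv
      refine ⟨((vu⁻¹ : R'ˣ) : R') ^ e, ?_⟩
      have hvv : (vu : R') * ((vu⁻¹ : R'ˣ) : R') = 1 := Units.mul_inv vu
      calc ϖ ^ (e * d) = ((vu : R') * ((vu⁻¹ : R'ˣ) : R')) ^ e * ϖ ^ (e * d) := by
            rw [hvv, one_pow, one_mul]
      _ = y ^ e * ((vu⁻¹ : R'ˣ) : R') ^ e := by
            rw [hyv, mul_pow, mul_pow, ← pow_mul, mul_comm d e]
            ring
    have := dvd_add hE2 hyE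
    simpa using this

/-- The key multiplicative-cancellation step: divisibility conditions survive
multiplication by a fixed nonzero constant. -/
theorem prim (hϖ : Irreducible ϖ) (hyd : ValData ϖ y d) {r : R'} (hr : r ≠ 0)
    (S : ℕ → R') (hS : ∀ i₁ i : ℕ, i₁ ≤ i → y ^ (i₁ + 1) ∣ S i - S i₁)
    (h : ∀ i, y ^ (i + 1) ∣ r * S i) : ∀ i, y ^ (i + 1) ∣ S i := by
  rcases hyd with ⟨hy0, -⟩ | ⟨v, hv, hyv⟩
  · subst hy0
    intro i
    have := h i
    rw [zero_pow (by omega), zero_dvd_iff] at this ⊢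
    rcases mul_eq_zero.mp this with h' | h'
    · exact absurd h' hr
    · exact h'
  · rcases Nat.eq_zero_or_pos d with hd0 | hd1
    · -- y is a unit
      intro i
      have : IsUnit (y ^ (i + 1)) := by
        subst hd0; rw [hyv]; simpa using hv.pow (i + 1)
      exact this.dvd
    · by_contra hcon
      push_neg at hcon
      obtain ⟨i₁, hni⟩ := hcon
      have hS0 : S i₁ ≠ 0 := fun h0 => hni (h0 ▸ dvd_zero _)
      obtain ⟨c, uS, hSc⟩ := IsDiscreteValuationRing.eq_unit_mul_pow_irreducible hS0 hϖ
      obtain ⟨a, ur, hra⟩ := IsDiscreteValuationRing.eq_unit_mul_pow_irreducible hr hϖ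
      have hypow : ∀ k : ℕ, y ^ k = v ^ k * ϖ ^ (k * d) := fun k => by
        rw [hyv, mul_pow, ← pow_mul, mul_comm d k]
      have hc_lt : c < (i₁ + 1) * d := by
        by_contra hge
        refine hni ?_
        rw [hSc, hypow]
        exact (unit_pow_dvd_unit_pow_iff hϖ (hv.pow _) uS.isUnit).mpr (by omega)
      set i := i₁ + a + c + 1 with hi
      obtain ⟨E, hE⟩ := hS i₁ i (by omega)
      have d1 : ϖ ^ (a + c + 1) ∣ r * S i := by
        refine dvd_trans ?_ (h i)
        rw [hypow (i + 1)]
        refine Dvd.dvd.mul_left (pow_dvd_pow ϖ ?_) _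
        have : (i + 1) * 1 ≤ (i + 1) * d := Nat.mul_le_mul_left _ hd1
        omega
      have d2 : ϖ ^ (a + c + 1) ∣ r * (S i - S i₁) := by
        rw [hE, hra, hypow (i₁ + 1)]
        refine dvd_trans (pow_dvd_pow ϖ (?_ : a + c + 1 ≤ a + (i₁ + 1) * d)) ?_
        · omega
        · exact ⟨(ur : R') * v ^ (i₁ + 1) * E, by rw [pow_add]; ring⟩
      have d3 : ϖ ^ (a + c + 1) ∣ (↑ur * ↑uS : R') * ϖ ^ (a + c) := by
        have heq : (↑ur * ↑uS : R') * ϖ ^ (a + c) = r * S i - r * (S i - S i₁) := by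
          rw [hra, hSc, pow_add]; ring
        rw [heq]
        exact dvd_sub d1 d2
      have := (unit_pow_dvd_iff hϖ (ur.isUnit.mul uS.isUnit)).mp d3
      omega

end Prim

section Boot

variable {R : Type*} [CommRing R] {R' : Type*} [CommRing R'] [IsDomain R']
  [IsDiscreteValuationRing R'] [Algebra R R'] {ϖ y : R'} {d : ℕ}

theorem boot (hϖ : Irreducible ϖ) (hyd : ValData ϖ y d) (hϖy : ϖ ∣ y)
    (σ : PowerSeries R ≃ₐ[R] PowerSeries R)
    (hn0 : ((orderOf σ : ℕ) : R') ≠ 0)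
    (m₂ : ℕ)
    (hdvd : ((X : PowerSeries R') - C y) ^ (m₂ + 2) ∣
      PowerSeries.map (algebraMap R R') (σ X - X)) :
    ((X : PowerSeries R') - C y) ^ (m₂ + 3) ∣
      PowerSeries.map (algebraMap R R') (σ X - X) := by
  set φ := PowerSeries.map (algebraMap R R') with hφ
  set t : PowerSeries R' := X - C y with htdef
  set f' : PowerSeries R' := φ (σ X - X) with hf'
  obtain ⟨u, hu⟩ := hdvd
  have ht1 : inV ϖ 1 1 t := by
    intro j
    cases j with
    | zero =>
        have : PowerSeries.coeff 0 t = -y := by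
          simp [htdef]
        rw [this]
        simpa using hϖy
    | succ j => simp [Nat.succ_mul]
  have hX1 : inV ϖ 1 1 (X : PowerSeries R') := by
    intro j
    cases j with
    | zero => simp
    | succ j => simp [Nat.succ_mul]
  have hs'def : φ (σ X) = X + f' := by
    rw [hf', hφ, map_sub, PowerSeries.map_X]
    ring
  set n := orderOf σ with hn
  have hσn : σ ^ n = 1 := pow_orderOf_eq_one σ
  -- The approximate conjugation estimate, by induction on k.
  have key : ∀ k N : ℕ, ∃ q r : PowerSeries R',
      φ ((σ ^ k) X) - X - ((k : ℕ) : PowerSeries R') * f' = t ^ (m₂ + 3) * q + r ∧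
        inV ϖ 1 N r := by
    intro k
    induction k with
    | zero =>
        intro N
        refine ⟨0, 0, ?_, inV_zero⟩
        have h00 : (σ ^ 0) X = X := by rw [pow_zero]; exact AlgEquiv.one_apply X
        rw [h00, hφ, PowerSeries.map_X]
        push_cast
        ring
    | succ k ih =>
        intro N
        set N₀ := N + 2 with hN₀
        obtain ⟨q₀, r₀, hIH, hr₀⟩ := ih N₀
        obtain ⟨H, hexp⟩ := algEquiv_expand (σ ^ k) (σ X) N₀
        set G : PowerSeries R' := φ ((σ ^ k) X) with hG
        have hφexp : φ ((σ ^ (k + 1)) X) =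
            (∑ i ∈ Finset.range N₀,
              C (PowerSeries.coeff i (φ (σ X))) * G ^ i) + G ^ N₀ * φ H := by
          have hcomp : (σ ^ (k + 1)) X = (σ ^ k) (σ X) := by
            rw [pow_succ, AlgEquiv.mul_apply]
          rw [hcomp, hexp, hφ, map_add, map_mul, map_pow, map_sum]
          congr 1
          refine Finset.sum_congr rfl fun i _ => ?_
          rw [map_mul, map_pow, PowerSeries.map_C, PowerSeries.coeff_map]
        set δ : PowerSeries R' := G - X with hδdef
        obtain ⟨W, hW⟩ := sum_taylor G X
          (fun i => C (PowerSeries.coeff i (φ (σ X)))) N₀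
        set Pt := ∑ i ∈ Finset.range N₀,
          C (PowerSeries.coeff i (φ (σ X))) * X ^ i with hPt
        set dN := ∑ i ∈ Finset.range N₀,
          ((i : ℕ) : PowerSeries R') * C (PowerSeries.coeff i (φ (σ X))) * X ^ (i - 1)
          with hdN
        set Z : PowerSeries R' := ((k : ℕ) : PowerSeries R') * u + t * q₀ with hZ
        have hδ : δ = t ^ (m₂ + 2) * Z + r₀ := by
          have hδ0 : δ = ((k : ℕ) : PowerSeries R') * f' + t ^ (m₂ + 3) * q₀ + r₀ := by
            rw [hδdef]; linear_combination hIH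
          rw [hδ0, hu, hZ]; ring
        have hδ1 : inV ϖ 1 1 δ := by
          rw [hδ]
          exact inV_add (inV_mul_right Z (inV_mono (by omega) (inV_pow ht1 (m₂ + 2))))
            (inV_mono (by omega) hr₀)
        have hG1 : inV ϖ 1 1 G := by
          have : G = X + δ := by rw [hδdef]; ring
          rw [this]; exact inV_add hX1 hδ1
        obtain ⟨Dw, hDw⟩ := der_t_pow (y := y) (m₂ + 1) u
        -- hDw : derivativeFun (t ^ (m₂ + 2) * u) = t ^ (m₂ + 1) * Dw
        set εN := dN - 1 with hεdef
        have hcoeff_dN : ∀ j, j + 1 < N₀ → PowerSeries.coeff j dN =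
            ((j + 1 : ℕ) : R') * PowerSeries.coeff (j + 1) (φ (σ X)) := by
          intro j hj
          rw [hdN, map_sum]
          rw [Finset.sum_eq_single (j + 1)]
          · rw [show ((j + 1 : ℕ) : PowerSeries R') = C ((j + 1 : ℕ) : R') from
              (map_natCast (C (R := R')) (j + 1)).symm, ← map_mul,
              PowerSeries.coeff_C_mul_X_pow]
            simp
          · intro i hi hne
            rw [show ((i : ℕ) : PowerSeries R') = C ((i : ℕ) : R') from
              (map_natCast (C (R := R')) i).symm, ← map_mul, PowerSeries.coeff_C_mul_X_pow]
            rcases eq_or_ne j (i - 1) with hji | hji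
            · have hi0 : i = 0 := by omega
              subst hi0
              simp
            · rw [if_neg (fun hh => hji hh)]
          · intro hni
            exact absurd (Finset.mem_range.mpr hj) hni
        have hεv : inV ϖ 1 (N₀ - 1) (εN - t ^ (m₂ + 1) * Dw) := by
          refine inV_of_coeff_eq_zero le_rfl ?_
          intro j hj
          rw [← hDw, map_sub, map_sub]
          have hcd := hcoeff_dN j (by omega)
          have hfu : ((X : PowerSeries R') - C y) ^ (m₂ + 1 + 1) * u = f' := by
            rw [hu]
          rw [hfu, coeff_derivativeFun_aux, hcd, hs'def, map_add]
          cases j with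
          | zero => simp [PowerSeries.coeff_one, PowerSeries.coeff_X]
          | succ j =>
              simp only [PowerSeries.coeff_one, PowerSeries.coeff_X, if_neg
                (by omega : ¬(j + 1 = 0)), if_neg (by omega : ¬(j + 1 + 1 = 1))]
              push_cast
              ring
        -- assemble the pieces
        have hr₀N : inV ϖ 1 N r₀ := inV_mono (by omega) hr₀
        have hPts : inV ϖ 1 N (Pt - φ (σ X)) := by
          refine inV_mono (by omega : N ≤ N₀) (inV_of_coeff_eq_zero le_rfl ?_)
          intro j hj
          rw [hPt, map_sub, coeff_Psum, if_pos hj, sub_self]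
        set v₁ : PowerSeries R' := εN - t ^ (m₂ + 1) * Dw with hv₁
        have hv₁N : inV ϖ 1 (N + 1) v₁ := inV_mono (by omega) hεv
        have hεeq : εN = dN - 1 := rfl
        have hv₁eq : v₁ = εN - t ^ (m₂ + 1) * Dw := rfl
        have e1 := hφexp
        rw [hW] at e1
        rw [← hδdef] at e1
        have htot : φ ((σ ^ (k + 1)) X) - X - (((k + 1 : ℕ)) : PowerSeries R') * f' =
            (Pt - φ (σ X)) + (t ^ (m₂ + 3) * q₀ + r₀) + (t ^ (m₂ + 1) * Dw + v₁) * δ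
              + δ ^ 2 * W + G ^ N₀ * φ H := by
          push_cast
          linear_combination e1 + hIH + hs'def + δ * hεeq + δ * hv₁eq
        refine ⟨q₀ + t ^ m₂ * Dw * Z + t ^ (m₂ + 1) * Z ^ 2 * W,
          (Pt - φ (σ X)) + r₀ + (t ^ (m₂ + 1) * Dw * r₀ + v₁ * δ)
            + (2 * t ^ (m₂ + 2) * Z * r₀ + r₀ * r₀) * W + G ^ N₀ * φ H, ?_, ?_⟩
        · rw [htot, hδ]
          ring
        · refine inV_add (inV_add (inV_add (inV_add hPts hr₀N) ?_) ?_) ?_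
          · exact inV_add (inV_mul_left _ hr₀N)
              (inV_mono (by omega) (inV_mul_right δ hv₁N))
          · exact inV_mul_right W
              (inV_add (inV_mul_left _ hr₀N) (inV_mul_left r₀ hr₀N))
          · exact inV_mono (by omega) (inV_mul_right (φ H) (inV_pow hG1 N₀))
  -- endgame: evaluate at k = n and divide out t^(m₂+2)
  obtain ⟨w', C₀, hw', hDIV⟩ := inV_of_t_pow_mul (y := y) (d := d) hϖ hyd (m₂ + 2)
    (le_refl 1)
  have hSdiff : ∀ i₁ i : ℕ, i₁ ≤ i → y ^ (i₁ + 1) ∣ Ssum y u i - Ssum y u i₁ := by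
    intro i₁ i h
    rw [Ssum, Ssum, ← Finset.sum_Ico_eq_sub _ (by omega : i₁ + 1 ≤ i + 1)]
    refine Finset.dvd_sum fun k hk => ?_
    rw [Finset.mem_Ico] at hk
    exact Dvd.dvd.mul_left (pow_dvd_pow y (by omega)) _
  have hXn : φ ((σ ^ n) X) = X := by
    rw [hσn]
    show φ ((1 : PowerSeries R ≃ₐ[R] PowerSeries R) X) = X
    rw [AlgEquiv.one_apply, hφ, PowerSeries.map_X]
  have hnS : ∀ i, y ^ (i + 1) ∣ ((n : ℕ) : R') * Ssum y u i := by
    intro i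
    refine approx_dvd hϖ hyd (i + 1) fun M => ?_
    obtain ⟨q, r, hkey, hr⟩ := key n (M + C₀ + i * w')
    rw [hXn] at hkey
    set z : PowerSeries R' := -(((n : ℕ) : PowerSeries R') * u) - t * q with hzdef
    have hzr : t ^ (m₂ + 2) * z = r := by
      rw [hu] at hkey
      rw [hzdef]
      linear_combination hkey
    have hz : inV ϖ w' (M + C₀ + i * w' - C₀) z := hDIV _ z (by rw [hzr]; exact hr)
    refine ⟨-(Ssum y z i), ?_, ?_⟩
    · have hSz := Ssum_of_inV (y := y) hz i
      exact Dvd.dvd.neg_right ((pow_dvd_pow ϖ (by omega)).trans hSz)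
    · have hsum0 : ((n : ℕ) : PowerSeries R') * u + t * q + z = 0 := by
        rw [hzdef]; ring
      have hS1 : Ssum y (((n : ℕ) : PowerSeries R') * u) i + Ssum y (t * q) i
          + Ssum y z i = 0 := by
        rw [← Ssum_add, ← Ssum_add, hsum0]
        simp [Ssum]
      have hSn : Ssum y (((n : ℕ) : PowerSeries R') * u) i
          = ((n : ℕ) : R') * Ssum y u i := by
        rw [show (((n : ℕ)) : PowerSeries R') = C ((n : ℕ) : R') from
          (map_natCast (C (R := R')) n).symm, Ssum_C_mul]
      have hSt := Ssum_t_mul (y := y) q i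
      exact ⟨PowerSeries.coeff i q, by linear_combination hS1 - hSn - hSt⟩
  have hprim := prim hϖ hyd (show ((n : ℕ) : R') ≠ 0 from hn0) (Ssum y u) hSdiff hnS
  have htu : t ∣ u := by
    rcases eq_or_ne y 0 with hy0 | hy0
    · have h0 := hprim 0
      rw [hy0, zero_pow (by omega : (0:ℕ) + 1 ≠ 0), zero_dvd_iff] at h0
      have hu0 : PowerSeries.constantCoeff u = 0 := by
        simpa [Ssum, hy0] using h0
      have ht0 : t = X := by rw [htdef, hy0, map_zero, sub_zero]
      rw [ht0]
      exact PowerSeries.X_dvd_iff.mpr hu0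
    · exact t_dvd_of_Ssum hy0 hprim
  obtain ⟨u', hu'⟩ := htu
  exact ⟨u', by rw [hu, hu']; ring⟩

end Boot

end Stmt7Aux

open Stmt7Aux in
/-- Let `σ ≠ id` be an automorphism of finite order of the open disk over a complete
discretely valued field `K` of characteristic `0` (equivalently, an `R`-algebra
automorphism of `R[[z]]`).  Then every fixed point of `σ` is simple: for every point `y`
of the open disk over an extension (i.e. a non-unit `y` in an extension `R'` of `R`),
the linear factor `z - y` divides `σ(z) - z` at most once. -/
theorem stmt7 (R : Type*) [CommRing R] [IsDomain R] [IsDiscreteValuationRing R]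
    [CharZero R] (π : R) (hπ : Irreducible π)
    [IsAdicComplete (Ideal.span {π}) R]
    (p : ℕ) (hp : p.Prime) (hchar : CharP (R ⧸ Ideal.span {π}) p)
    (σ : PowerSeries R ≃ₐ[R] PowerSeries R) (hσ : σ ≠ AlgEquiv.refl)
    (hfin : IsOfFinOrder σ)
    (R' : Type*) [CommRing R'] [IsDomain R'] [IsDiscreteValuationRing R']
    [Algebra R R'] (hinj : Function.Injective (algebraMap R R'))
    (y : R') (hy : ¬IsUnit y)
    (hzero : (PowerSeries.X - PowerSeries.C (R := R') y) ∣
      PowerSeries.map (algebraMap R R') (σ PowerSeries.X - PowerSeries.X)) :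
    ¬((PowerSeries.X - PowerSeries.C (R := R') y) ^ 2 ∣
      PowerSeries.map (algebraMap R R') (σ PowerSeries.X - PowerSeries.X)) := by
  intro h2
  obtain ⟨ϖ, hϖ⟩ := IsDiscreteValuationRing.exists_irreducible R'
  have hyd : ∃ d, ValData ϖ y d ∧ ϖ ∣ y := by
    rcases eq_or_ne y 0 with hy0 | hy0
    · exact ⟨1, Or.inl ⟨hy0, rfl⟩, by rw [hy0]; exact dvd_zero ϖ⟩
    · obtain ⟨d, v, hv⟩ := IsDiscreteValuationRing.eq_unit_mul_pow_irreducible hy0 hϖ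
      refine ⟨d, Or.inr ⟨v, v.isUnit, hv⟩, ?_⟩
      have hd1 : 1 ≤ d := by
        by_contra hd
        exact hy (by rw [hv, show d = 0 by omega, pow_zero, mul_one]; exact v.isUnit)
      rw [hv]
      exact Dvd.dvd.mul_left (dvd_pow_self ϖ (by omega)) _
  obtain ⟨d, hValD, hϖy⟩ := hyd
  have hordpos : 0 < orderOf σ := hfin.orderOf_pos
  have hn0 : ((orderOf σ : ℕ) : R') ≠ 0 := by
    have h1 : ((orderOf σ : ℕ) : R) ≠ 0 := Nat.cast_ne_zero.mpr (by omega)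
    intro h
    exact h1 (hinj (show algebraMap R R' ((orderOf σ : ℕ) : R) = algebraMap R R' 0 by
      rw [map_natCast, map_zero, h]))
  have hall : ∀ j : ℕ, ((X : PowerSeries R') - C y) ^ (j + 2) ∣
      PowerSeries.map (algebraMap R R') (σ X - X) := by
    intro j
    induction j with
    | zero => exact h2
    | succ j ih =>
        have := boot hϖ hValD hϖy σ hn0 j ih
        exact (show j + 3 = j + 1 + 2 by omega) ▸ this
  have ht1 : inV ϖ 1 1 ((X : PowerSeries R') - C y) := by
    intro j
    cases j with
    | zero =>
        have hc : PowerSeries.coeff 0 ((X : PowerSeries R') - C y) = -y := by simp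
        rw [hc]
        simpa using hϖy
    | succ j => simp [Nat.succ_mul]
  have hf0 : PowerSeries.map (algebraMap R R') (σ X - X) = 0 := by
    ext j
    rw [map_zero]
    refine eq_zero_of_forall_pow_dvd hϖ fun M => ?_
    obtain ⟨c, hc⟩ := hall (M + j)
    have hin : inV ϖ 1 (M + j + 2) (PowerSeries.map (algebraMap R R') (σ X - X)) := by
      rw [hc]
      exact inV_mul_right c (inV_pow ht1 (M + j + 2))
    exact (pow_dvd_pow ϖ (by omega)).trans (hin j)
  have hsX : σ X = X := by
    rw [← sub_eq_zero]
    apply PowerSeries.ext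
    intro j
    have hcj := congrArg (PowerSeries.coeff j) hf0
    rw [PowerSeries.coeff_map, map_zero] at hcj
    rw [map_zero]
    exact hinj (hcj.trans (map_zero (algebraMap R R')).symm)
  exact hσ (algEquiv_eq_id_of_X σ hsX)
end

section
/- Let G be a finite group acting faithfully on the open p-adic disk Y with a unique fixed point y (i.e., y is the only point of Y(K̄) with nontrivial stabilizer, and it is fixed by all of G). Then G is cyclic. -/
open PowerSeries

lemma decomp {R : Type*} [CommRing R] (f : PowerSeries R)
    (h : constantCoeff f = 0) :
    f = C (coeff 1 f) * X + X ^ 2 * PowerSeries.mk (fun n => coeff (n + 2) f) := by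
  ext n
  match n with
  | 0 => simp [← coeff_zero_eq_constantCoeff] at h ⊢; simpa using h
  | 1 =>
    rw [map_add, coeff_C_mul, coeff_one_X, mul_one,
      show (X:R⟦X⟧)^2 * PowerSeries.mk (fun n => coeff (n + 2) f) = X * (X * PowerSeries.mk (fun n => coeff (n + 2) f)) by ring,
      coeff_succ_X_mul]
    simp [← coeff_zero_eq_constantCoeff, coeff_zero_eq_constantCoeff]
  | (m + 2) =>
    rw [map_add, coeff_C_mul, show m + 2 = m + 1 + 1 from rfl, coeff_X,
      show m + 1 + 1 = m + 2 from rfl, coeff_X_pow_mul]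
    simp

lemma coeff_one_apply {R : Type*} [CommRing R] (e : PowerSeries R ≃ₐ[R] PowerSeries R)
    (he : constantCoeff (e X) = 0) (f : PowerSeries R) (hf : constantCoeff f = 0) :
    coeff 1 (e f) = coeff 1 f * coeff 1 (e X) := by
  obtain ⟨u, hu⟩ := X_dvd_iff.mpr he
  calc coeff 1 (e f)
      = coeff 1 (C (coeff 1 f) * e X + (e X) ^ 2 * e (PowerSeries.mk (fun n => coeff (n + 2) f))) := by
        rw [← map_pow, ← map_mul, C_eq_algebraMap, ← AlgEquiv.commutes e (coeff 1 f), ← map_mul, ← map_add, ← C_eq_algebraMap, ← decomp f hf]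
    _ = coeff 1 f * coeff 1 (e X) := by
        rw [map_add, coeff_C_mul, hu]
        have : (X * u) ^ 2 * e (PowerSeries.mk (fun n => coeff (n + 2) f)) =
            X * (X * (u ^ 2 * e (PowerSeries.mk (fun n => coeff (n + 2) f)))) := by ring
        rw [this, coeff_succ_X_mul]
        simp [← coeff_zero_eq_constantCoeff, coeff_zero_eq_constantCoeff]

/-- Let `G` be a finite group acting faithfully on the open `p`-adic disk with a unique
fixed point `y` (which, after a change of parameter, is `z = 0`): `z = 0` is fixed by all
of `G`, and for every `σ ≠ 1` the power series `σ(z) - z` has exactly one zero in the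
open disk, counted with multiplicity (i.e. writing `σ(z) - z = c·g` with `g` primitive,
the reduction of `g` has `z`-order `1`).  Then `G` is cyclic. -/
theorem stmt8 (R : Type*) [CommRing R] [IsDomain R] [IsDiscreteValuationRing R]
    [CharZero R] (π : R) (hπ : Irreducible π)
    [IsAdicComplete (Ideal.span {π}) R]
    (p : ℕ) (hp : p.Prime) (hchar : CharP (R ⧸ Ideal.span {π}) p)
    (halgcl : ∀ f : Polynomial (R ⧸ Ideal.span {π}), f.Monic → 0 < f.degree →
      ∃ x, Polynomial.eval x f = 0)
    (G : Type*) [Group G] [Finite G]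
    (φ : G →* (PowerSeries R ≃ₐ[R] PowerSeries R)) (hφ : Function.Injective φ)
    (hfix : ∀ σ : G, PowerSeries.constantCoeff (φ σ PowerSeries.X) = 0)
    (huniq : ∀ σ : G, σ ≠ 1 → ∀ (c : R) (g : PowerSeries R),
      φ σ PowerSeries.X - PowerSeries.X = PowerSeries.C c * g →
      gaussVal π g = 0 → (redMod π g).order = 1) :
    IsCyclic G := by
  classical
  -- the multiplier character
  set χf : G → R := fun σ => coeff 1 (φ σ X) with hχf
  have hone : χf 1 = 1 := by simp [hχf, map_one φ]
  have hmul : ∀ σ τ : G, χf (σ * τ) = χf σ * χf τ := by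
    intro σ τ
    have : φ (σ * τ) X = φ σ (φ τ X) := by rw [map_mul φ]; rfl
    rw [hχf]
    simp only
    rw [this, coeff_one_apply (φ σ) (hfix σ) (φ τ X) (hfix τ), mul_comm]
  let χ : G →* R := { toFun := χf, map_one' := hone, map_mul' := hmul }
  apply isCyclic_of_subgroup_isDomain χ
  rw [injective_iff_map_eq_one]
  intro σ hσ1
  by_contra hσ
  -- the series f = σ(X) - X has coeff 0 and coeff 1 equal to zero
  set f : PowerSeries R := φ σ X - X with hf
  have hf0 : constantCoeff f = 0 := by
    rw [hf, map_sub, hfix σ, constantCoeff_X, sub_zero]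
  have hf1 : coeff 1 f = 0 := by
    rw [hf, map_sub, coeff_one_X]
    have : coeff 1 (φ σ X) = 1 := hσ1
    rw [this, sub_self]
  haveI : Nontrivial (R ⧸ Ideal.span {π}) :=
    Ideal.Quotient.nontrivial_iff.mpr (by
      rw [Ne, Ideal.span_singleton_eq_top]; exact hπ.not_isUnit)
  by_cases hfz : f = 0
  · -- f = 0 : use decomposition f = C 0 * 1
    have hg : gaussVal π (1 : PowerSeries R) = 0 := by
      apply le_antisymm _ zero_le
      refine le_trans (iInf_le _ 0) ?_
      rw [coeff_zero_eq_constantCoeff, map_one]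
      rw [emultiplicity_eq_zero.mpr (fun h => hπ.not_isUnit (isUnit_of_dvd_one h))]
    have := huniq σ hσ 0 1 (by rw [map_zero, zero_mul]; exact hfz) hg
    rw [map_one, order_one] at this
    exact (by norm_num : (0 : ℕ∞) ≠ 1) this
  · -- f ≠ 0 : extract the content π^n
    obtain ⟨i₀, hi₀⟩ : ∃ i, coeff i f ≠ 0 := by
      by_contra h
      push_neg at h
      exact hfz (PowerSeries.ext fun n => by rw [h n, map_zero])
    set S : Set ℕ := {n : ℕ | ∃ i, emultiplicity π (coeff i f) = (n : ℕ∞)} with hS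
    have hSne : S.Nonempty := by
      have hfin : FiniteMultiplicity π (coeff i₀ f) :=
        FiniteMultiplicity.of_not_isUnit hπ.not_isUnit hi₀
      exact ⟨multiplicity π (coeff i₀ f), i₀, hfin.emultiplicity_eq_multiplicity⟩
    set n : ℕ := sInf S with hn
    obtain ⟨j, hj⟩ : n ∈ S := Nat.sInf_mem hSne
    have hle : ∀ i, (n : ℕ∞) ≤ emultiplicity π (coeff i f) := by
      intro i
      rcases eq_or_ne (coeff i f) 0 with h | h
      · rw [h, emultiplicity_zero]; exact le_top
      · have hfin : FiniteMultiplicity π (coeff i f) :=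
          FiniteMultiplicity.of_not_isUnit hπ.not_isUnit h
        rw [hfin.emultiplicity_eq_multiplicity]
        have hmem : multiplicity π (coeff i f) ∈ S := ⟨i, hfin.emultiplicity_eq_multiplicity⟩
        exact_mod_cast Nat.sInf_le hmem
    have hdvd : ∀ i, π ^ n ∣ coeff i f := fun i => pow_dvd_of_le_emultiplicity (hle i)
    set g : PowerSeries R := PowerSeries.mk (fun i => (hdvd i).choose) with hg
    have hfg : f = C (π ^ n) * g := by
      ext i
      rw [coeff_C_mul, hg, coeff_mk]
      exact (hdvd i).choose_spec
    have hgj : ¬ π ∣ coeff j g := by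
      intro hd
      have : π ^ (n + 1) ∣ coeff j f := by
        rw [hfg, coeff_C_mul, pow_succ]
        exact mul_dvd_mul_left _ hd
      have h2 := le_emultiplicity_of_pow_dvd this
      rw [hj] at h2
      exact absurd (by exact_mod_cast h2) (by omega)
    have hgv : gaussVal π g = 0 := by
      apply le_antisymm _ zero_le
      refine le_trans (iInf_le _ j) ?_
      rw [emultiplicity_eq_zero.mpr hgj]
    have hord := huniq σ hσ (π ^ n) g hfg hgv
    -- but coeff 1 of the reduction of g vanishes
    have hg1 : coeff 1 g = 0 := by
      have : coeff 1 f = π ^ n * coeff 1 g := by rw [hfg, coeff_C_mul]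
      rw [hf1] at this
      rcases mul_eq_zero.mp this.symm with h | h
      · exact absurd h (pow_ne_zero n hπ.ne_zero)
      · exact h
    have : coeff 1 (redMod π g) ≠ 0 := by
      rw [show (1 : ℕ∞) = ((1 : ℕ) : ℕ∞) from rfl, order_eq_nat] at hord
      exact hord.1
    apply this
    rw [redMod, coeff_map, hg1, map_zero]
end

section
/- Let k be an algebraically closed field of characteristic 2, and let Ḡ ≅ ℤ/2 × ℤ/2 act on k[[t]] by sending μ ∈ Ḡ (via an embedding Ḡ ↪ (k,+)) to the automorphism t ↦ t/(1 + μt). Then this is a faithful action by k-algebra automorphisms, and for each of the three nontrivial characters χ of Ḡ, the Artin character satisfies a(χ) = 2, where a(ρ) = -ord_t(ρ(t) - t) for ρ ≠ 1 and a(1) = -Σ_{ρ≠1} a(ρ). -/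
open PowerSeries Finset

open Classical in
/-- The Artin character of a local action `φ` of a finite group on `k[[t]]`:
`a(ρ) = -ord_t(ρ(t) - t)` for `ρ ≠ 1` and `a(1) = -Σ_{ρ ≠ 1} a(ρ)`. -/
noncomputable def artinChar {k : Type*} [CommRing k] {G : Type*} [Group G] [Fintype G]
    (φ : G →* (PowerSeries k ≃ₐ[k] PowerSeries k)) : G → ℂ :=
  fun ρ =>
    if ρ = 1 then
      ∑ ρ' ∈ Finset.univ.erase (1 : G),
        (((φ ρ' PowerSeries.X - PowerSeries.X).order.toNat : ℕ) : ℂ)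
    else -(((φ ρ PowerSeries.X - PowerSeries.X).order.toNat : ℕ) : ℂ)

namespace Stmt16Aux
variable {k : Type*} [CommRing k]

noncomputable def substFun (g f : PowerSeries k) : PowerSeries k :=
  PowerSeries.mk fun m => PowerSeries.coeff m ((trunc (m + 1) f).eval₂ (C) g)

lemma eval₂_coeff_zero {g : PowerSeries k} (hg : constantCoeff g = 0)
    (p : Polynomial k) {N : ℕ} (hp : ∀ d < N, p.coeff d = 0) {m : ℕ} (hm : m < N) :
    coeff m (p.eval₂ (C) g) = 0 := by
  rw [Polynomial.eval₂_eq_sum, Polynomial.sum, map_sum]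
  apply Finset.sum_eq_zero
  intro e he
  have heN : N ≤ e := by
    by_contra h
    exact (Polynomial.mem_support_iff.mp he) (hp e (lt_of_not_ge h))
  have h0 : coeff m (g ^ e) = 0 :=
    X_pow_dvd_iff.mp (pow_dvd_pow_of_dvd (X_dvd_iff.mpr hg) e) m (lt_of_lt_of_le hm heN)
  rw [coeff_C_mul, h0, mul_zero]

lemma coeff_substFun {g : PowerSeries k} (hg : constantCoeff g = 0) (f : PowerSeries k)
    {m N : ℕ} (hm : m < N) :
    coeff m (substFun g f) = coeff m ((trunc N f).eval₂ (C) g) := by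
  rw [substFun, coeff_mk, ← sub_eq_zero, ← map_sub, ← Polynomial.eval₂_sub]
  apply eval₂_coeff_zero hg _ _ (Nat.lt_succ_self m)
  intro d hd
  rw [Polynomial.coeff_sub, coeff_trunc, coeff_trunc, if_pos hd, if_pos (lt_of_lt_of_le hd hm),
    sub_self]

lemma coeff_substFun_congr (g : PowerSeries k) {m : ℕ} {u v : PowerSeries k}
    (h : trunc (m + 1) u = trunc (m + 1) v) :
    coeff m (substFun g u) = coeff m (substFun g v) := by
  rw [substFun, substFun, coeff_mk, coeff_mk, h]

/-- Substitution as a `k`-algebra homomorphism. -/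
noncomputable def substAlgHom {g : PowerSeries k} (hg : constantCoeff g = 0) :
    PowerSeries k →ₐ[k] PowerSeries k where
  toFun := substFun g
  map_one' := by
    ext m
    rw [coeff_substFun hg 1 (Nat.lt_succ_self m), trunc_one, Polynomial.eval₂_one]
  map_mul' := fun f h => by
    ext m
    have h2 : coeff m (substFun g f * substFun g h) =
        coeff m ((trunc (m + 1) f * trunc (m + 1) h).eval₂ (C) g) := by
      rw [Polynomial.eval₂_mul, PowerSeries.coeff_mul, PowerSeries.coeff_mul]
      apply Finset.sum_congr rfl
      intro p hp
      have hpm := Finset.HasAntidiagonal.mem_antidiagonal.mp hp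
      rw [coeff_substFun hg f (show p.1 < m + 1 by omega),
        coeff_substFun hg h (show p.2 < m + 1 by omega)]
    rw [coeff_substFun hg _ (Nat.lt_succ_self m), h2, ← sub_eq_zero, ← map_sub,
      ← Polynomial.eval₂_sub]
    apply eval₂_coeff_zero hg _ _ (Nat.lt_succ_self m)
    intro d hd
    rw [Polynomial.coeff_sub, coeff_trunc, if_pos hd, PowerSeries.coeff_mul,
      Polynomial.coeff_mul, sub_eq_zero]
    apply Finset.sum_congr rfl
    intro p hp
    have hpm := Finset.HasAntidiagonal.mem_antidiagonal.mp hp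
    rw [coeff_trunc, coeff_trunc, if_pos (show p.1 < m + 1 by omega),
      if_pos (show p.2 < m + 1 by omega)]
  map_zero' := by
    ext m
    rw [coeff_substFun hg 0 (Nat.lt_succ_self m), map_zero, Polynomial.eval₂_zero, map_zero]
  map_add' := fun f h => by
    ext m
    rw [map_add, coeff_substFun hg _ (Nat.lt_succ_self m),
      coeff_substFun hg f (Nat.lt_succ_self m), coeff_substFun hg h (Nat.lt_succ_self m),
      map_add, Polynomial.eval₂_add, map_add]
  commutes' := fun a => by
    ext m
    show coeff m (substFun g (algebraMap k (PowerSeries k) a)) = _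
    rw [← C_eq_algebraMap, coeff_substFun hg _ (Nat.lt_succ_self m), trunc_C, Polynomial.eval₂_C]

lemma substFun_C {g : PowerSeries k} (hg : constantCoeff g = 0) (a : k) :
    substFun g (C a) = C a := by
  ext m
  rw [coeff_substFun hg _ (Nat.lt_succ_self m), trunc_C, Polynomial.eval₂_C]

lemma substFun_X {g : PowerSeries k} (hg : constantCoeff g = 0) :
    substFun g X = g := by
  ext m
  rw [coeff_substFun hg X (show m < m + 2 by omega), trunc_X, Polynomial.eval₂_X]

lemma substFun_id (f : PowerSeries k) : substFun (X : PowerSeries k) f = f := by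
  ext m
  rw [coeff_substFun (by simp) f (Nat.lt_succ_self m), Polynomial.eval₂_C_X_eq_coe,
    Polynomial.coeff_coe, coeff_trunc, if_pos (Nat.lt_succ_self m)]

lemma substFun_coe {g : PowerSeries k} (hg : constantCoeff g = 0) (p : Polynomial k) :
    substFun g (p : PowerSeries k) = p.eval₂ (C) g := by
  ext m
  rw [coeff_substFun hg _ (show m < m + p.natDegree + 1 by omega)]
  have : trunc (m + p.natDegree + 1) (p : PowerSeries k) = p := by
    apply Polynomial.ext
    intro d
    rw [coeff_trunc, Polynomial.coeff_coe]
    split_ifs with hd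
    · rfl
    · exact (Polynomial.coeff_eq_zero_of_natDegree_lt (by omega)).symm
  rw [this]


lemma constantCoeff_substFun {g : PowerSeries k} (hg : constantCoeff g = 0)
    {h : PowerSeries k} (hh : constantCoeff h = 0) :
    constantCoeff (substFun g h) = 0 := by
  rw [← coeff_zero_eq_constantCoeff_apply, coeff_substFun hg h Nat.zero_lt_one]
  have : trunc 1 h = 0 := by
    apply Polynomial.ext
    intro d
    rw [coeff_trunc, Polynomial.coeff_zero]
    split_ifs with hd
    · interval_cases d
      exact (coeff_zero_eq_constantCoeff_apply h).trans hh
    · rfl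
  rw [this, Polynomial.eval₂_zero, map_zero]

lemma substFun_substFun {g h : PowerSeries k} (hg : constantCoeff g = 0)
    (hh : constantCoeff h = 0) (f : PowerSeries k) :
    substFun g (substFun h f) = substFun (substFun g h) f := by
  have hgh : constantCoeff (substFun g h) = 0 := constantCoeff_substFun hg hh
  ext m
  have e1 : coeff m (substFun g (substFun h f)) =
      coeff m (substFun g (substFun h ((trunc (m + 1) f : Polynomial k) : PowerSeries k))) := by
    apply coeff_substFun_congr
    apply Polynomial.ext
    intro d
    rw [coeff_trunc, coeff_trunc]
    split_ifs with hd
    · exact coeff_substFun_congr h (by rw [trunc_trunc_of_le f (by omega)])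
    · rfl
  have e2 : substFun g (substFun h ((trunc (m + 1) f : Polynomial k) : PowerSeries k)) =
      substFun (substFun g h) ((trunc (m + 1) f : Polynomial k) : PowerSeries k) := by
    rw [substFun_coe hh, substFun_coe hgh]
    have := Polynomial.hom_eval₂ (trunc (m + 1) f) (C) (substAlgHom hg).toRingHom h
    rw [show (substAlgHom hg).toRingHom h = substFun g h from rfl] at this
    rw [show ((substAlgHom hg).toRingHom ((trunc (m+1) f).eval₂ (C) h))
        = substFun g ((trunc (m+1) f).eval₂ (C) h) from rfl] at this
    rw [this]
    apply Polynomial.eval₂_congr _ rfl rfl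
    apply RingHom.ext
    intro a
    show substFun g (C a) = C a
    exact substFun_C hg a
  rw [e1, e2]
  exact coeff_substFun_congr _ (by rw [trunc_trunc])


variable (k) in
noncomputable def mob (c : k) : PowerSeries k :=
  X * PowerSeries.invOfUnit (1 + C c * X) 1

lemma constantCoeff_one_add (c : k) : constantCoeff (1 + C c * X) = ((1 : kˣ) : k) := by
  simp

lemma constantCoeff_mob (c : k) : constantCoeff (mob k c) = 0 := by
  simp [mob]

lemma substFun_mob (c d : k) : substFun (mob k c) (mob k d) = mob k (c + d) := by
  set A : PowerSeries k := 1 + C c * X with hAdef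
  set α := invOfUnit A 1 with hαdef
  set β := invOfUnit ((1 : PowerSeries k) + C (c + d) * X) 1 with hβdef
  have hA : A * α = 1 := mul_invOfUnit _ _ (constantCoeff_one_add c)
  have hB : ((1 : PowerSeries k) + C (c + d) * X) * β = 1 :=
    mul_invOfUnit _ _ (constantCoeff_one_add (c + d))
  have hv : (1 + C d * mob k c) * substFun (mob k c) (invOfUnit (1 + C d * X) 1) = 1 := by
    have h0 := congrArg (substAlgHom (constantCoeff_mob c))
      (mul_invOfUnit ((1 : PowerSeries k) + C d * X) 1 (constantCoeff_one_add d))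
    have h1 : substAlgHom (constantCoeff_mob c) ((1 : PowerSeries k) + C d * X)
        = 1 + C d * mob k c := by
      rw [map_add, map_one, map_mul]
      congr 1
      congr 1
      · exact substFun_C (constantCoeff_mob c) d
      · exact substFun_X (constantCoeff_mob c)
    rw [map_mul, map_one, h1] at h0
    exact h0
  have hv' : (1 + C d * mob k c) * (A * β) = 1 := by
    have expand : (1 + C d * mob k c) * A = 1 + C (c + d) * X := by
      have hαA : α * A = 1 := by rw [mul_comm]; exact hA
      calc (1 + C d * mob k c) * A = A + C d * X * (α * A) := by rw [mob]; ring
      _ = A + C d * X := by rw [hαA, mul_one]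
      _ = 1 + C (c + d) * X := by rw [hAdef, map_add]; ring
    calc (1 + C d * mob k c) * (A * β)
        = ((1 + C d * mob k c) * A) * β := by ring
      _ = 1 := by rw [expand, hB]
  have huniq : substFun (mob k c) (invOfUnit (1 + C d * X) 1) = A * β := by
    calc substFun (mob k c) (invOfUnit (1 + C d * X) 1)
        = substFun (mob k c) (invOfUnit (1 + C d * X) 1)
          * ((1 + C d * mob k c) * (A * β)) := by rw [hv', mul_one]
      _ = ((1 + C d * mob k c) * substFun (mob k c) (invOfUnit (1 + C d * X) 1))
          * (A * β) := by ring
      _ = A * β := by rw [hv, one_mul]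
  have hmul : substFun (mob k c) (mob k d)
      = substFun (mob k c) X * substFun (mob k c) (invOfUnit (1 + C d * X) 1) :=
    map_mul (substAlgHom (constantCoeff_mob c)) X (invOfUnit (1 + C d * X) 1)
  rw [hmul, substFun_X (constantCoeff_mob c), huniq]
  calc mob k c * (A * β) = X * (A * α) * β := by rw [mob]; ring
    _ = X * β := by rw [hA]; ring
    _ = mob k (c + d) := rfl

lemma mob_zero : mob k (0 : k) = X := by
  have h1 : invOfUnit (1 : PowerSeries k) 1 = 1 := by
    have := mul_invOfUnit (1 : PowerSeries k) 1 (by simp)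
    simpa using this
  simp [mob, h1]

/-- The Möbius automorphism `t ↦ t/(1+ct)`. -/
noncomputable def mobEquiv (c : k) : PowerSeries k ≃ₐ[k] PowerSeries k :=
  AlgEquiv.ofAlgHom (substAlgHom (constantCoeff_mob c)) (substAlgHom (constantCoeff_mob (-c)))
    (AlgHom.ext fun f => by
      show substFun (mob k c) (substFun (mob k (-c)) f) = f
      rw [substFun_substFun (constantCoeff_mob c) (constantCoeff_mob (-c)),
        substFun_mob, add_neg_cancel, mob_zero, substFun_id])
    (AlgHom.ext fun f => by
      show substFun (mob k (-c)) (substFun (mob k c) f) = f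
      rw [substFun_substFun (constantCoeff_mob (-c)) (constantCoeff_mob c),
        substFun_mob, neg_add_cancel, mob_zero, substFun_id])

lemma mobEquiv_apply (c : k) (f : PowerSeries k) : mobEquiv c f = substFun (mob k c) f := rfl

lemma mobEquiv_zero : mobEquiv (0 : k) = 1 := by
  apply AlgEquiv.ext
  intro f
  rw [mobEquiv_apply, mob_zero, substFun_id]
  rfl

lemma mobEquiv_add (c d : k) : mobEquiv (c + d) = mobEquiv c * mobEquiv d := by
  apply AlgEquiv.ext
  intro f
  rw [show (mobEquiv c * mobEquiv d) f = mobEquiv c (mobEquiv d f) from rfl,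
    mobEquiv_apply, mobEquiv_apply, mobEquiv_apply,
    substFun_substFun (constantCoeff_mob c) (constantCoeff_mob d), substFun_mob]


lemma order_mob_sub_X [IsDomain k] {c : k} (hc : c ≠ 0) : (mob k c - X).order = 2 := by
  set A : PowerSeries k := 1 + C c * X with hAdef
  set α := invOfUnit A 1 with hαdef
  have hA : A * α = 1 := mul_invOfUnit _ _ (constantCoeff_one_add c)
  have key : mob k c - X = C (-c) * X ^ 2 * α := by
    calc mob k c - X = X * α - X := rfl
      _ = X * α - X * (A * α) := by rw [hA, mul_one]
      _ = X * α - X * ((1 + C c * X) * α) := by rw [hAdef]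
      _ = C (-c) * X ^ 2 * α := by rw [map_neg]; ring
  have h1 : (C (-c)).order = (0 : ℕ) := by
    rw [order_eq_nat]
    constructor
    · simpa using neg_ne_zero.mpr hc
    · intro i hi
      exact absurd hi (Nat.not_lt_zero i)
  have h2 : α.order = (0 : ℕ) := by
    rw [order_eq_nat]
    constructor
    · rw [coeff_zero_eq_constantCoeff_apply, hαdef, constantCoeff_invOfUnit]
      simp
    · intro i hi
      exact absurd hi (Nat.not_lt_zero i)
  rw [key, order_mul, order_mul, order_X_pow, h1, h2]
  simp

/-- The homomorphism `μ ↦ (t ↦ t/(1 + ι(μ) t))`. -/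
noncomputable def phi (ι : (ZMod 2 × ZMod 2) →+ k) :
    Multiplicative (ZMod 2 × ZMod 2) →* (PowerSeries k ≃ₐ[k] PowerSeries k) where
  toFun μ := mobEquiv (ι μ.toAdd)
  map_one' := by
    show mobEquiv (ι (Multiplicative.toAdd 1)) = 1
    rw [toAdd_one, map_zero, mobEquiv_zero]
  map_mul' μ ν := by
    show mobEquiv (ι (Multiplicative.toAdd (μ * ν))) = _
    rw [toAdd_mul, map_add, mobEquiv_add]

lemma phi_X (ι : (ZMod 2 × ZMod 2) →+ k) (μ : Multiplicative (ZMod 2 × ZMod 2)) :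
    phi ι μ X = mob k (ι μ.toAdd) :=
  substFun_X (constantCoeff_mob _)

end Stmt16Aux

/-- Let `k` be an algebraically closed field of characteristic `2` and let
`Ḡ ≅ ℤ/2 × ℤ/2` act on `k[[t]]` by sending `μ ∈ Ḡ` (via an embedding `Ḡ ↪ (k,+)`) to
`t ↦ t/(1 + μt)`.  Then this is a faithful action by `k`-algebra automorphisms and for
each of the three nontrivial characters `χ` of `Ḡ`, the Artin character satisfies
`⟨χ, a⟩ = 2`. -/
theorem stmt16 (k : Type*) [Field k] [IsAlgClosed k] [CharP k 2]
    (ι : (ZMod 2 × ZMod 2) →+ k) (hι : Function.Injective ι) :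
    ∃ φ : Multiplicative (ZMod 2 × ZMod 2) →* (PowerSeries k ≃ₐ[k] PowerSeries k),
      Function.Injective φ ∧
      (∀ μ : Multiplicative (ZMod 2 × ZMod 2),
        φ μ PowerSeries.X =
          PowerSeries.X *
            PowerSeries.invOfUnit (1 + PowerSeries.C (ι (Multiplicative.toAdd μ)) *
              PowerSeries.X) 1) ∧
      ∀ χ : Multiplicative (ZMod 2 × ZMod 2) →* ℂ, χ ≠ 1 →
        innerCF (⇑χ) (artinChar φ) = 2 := by
  classical
  refine ⟨Stmt16Aux.phi ι, ?_, ?_, ?_⟩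
  · -- injectivity
    rw [injective_iff_map_eq_one]
    intro μ h
    have h1 : Stmt16Aux.mob k (ι μ.toAdd) = X := by
      have h2 : (Stmt16Aux.phi ι μ) X = ((1 : PowerSeries k ≃ₐ[k] PowerSeries k)) X := by rw [h]
      rwa [Stmt16Aux.phi_X, AlgEquiv.one_apply] at h2
    set c := ι μ.toAdd with hcdef
    have h4 : (1 + C c * X) * Stmt16Aux.mob k c = X := by
      have hu := mul_invOfUnit (1 + C c * X) 1 (Stmt16Aux.constantCoeff_one_add c)
      calc (1 + C c * X) * Stmt16Aux.mob k c
          = X * ((1 + C c * X) * invOfUnit (1 + C c * X) 1) := by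
            rw [Stmt16Aux.mob]; ring
        _ = X := by rw [hu, mul_one]
    rw [h1] at h4
    have h6 : C c * X ^ 2 = 0 := by
      calc C c * X ^ 2 = (1 + C c * X) * X - X := by ring
        _ = 0 := by rw [h4, sub_self]
    have hc : c = 0 := by
      have h7 := congrArg (coeff 2) h6
      simpa using h7
    have h8 : μ.toAdd = 0 := hι (by rw [map_zero]; exact hc)
    have := congrArg Multiplicative.ofAdd h8
    simpa using this
  · intro μ
    exact Stmt16Aux.phi_X ι μ
  · intro χ hχ
    set G := Multiplicative (ZMod 2 × ZMod 2)
    have hne : ∀ ρ : G, ρ ≠ 1 → ι ρ.toAdd ≠ 0 := by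
      intro ρ hρ h0
      apply hρ
      have h8 : ρ.toAdd = 0 := hι (by rw [map_zero]; exact h0)
      have := congrArg Multiplicative.ofAdd h8
      simpa using this
    have hval : ∀ ρ : G, ρ ≠ 1 → ((Stmt16Aux.phi ι ρ) X - X).order = 2 := by
      intro ρ hρ
      rw [Stmt16Aux.phi_X]
      exact Stmt16Aux.order_mob_sub_X (hne ρ hρ)
    have htoNat : ∀ ρ : G, ρ ≠ 1 →
        ((((Stmt16Aux.phi ι ρ) X - X).order.toNat : ℕ) : ℂ) = 2 := by
      intro ρ hρ
      rw [hval ρ hρ]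
      norm_num
    have hcard3 : (Finset.univ.erase (1 : G)).card = 3 := by
      rw [Finset.card_erase_of_mem (Finset.mem_univ _), Finset.card_univ]
      simp [G]
    have ha1 : artinChar (Stmt16Aux.phi ι) 1 = 6 := by
      rw [artinChar, if_pos rfl]
      have h9 : ∀ s : Finset G, (1 : G) ∉ s →
          ∑ ρ' ∈ s, ((((Stmt16Aux.phi ι) ρ') X - X).order.toNat : ℂ) = s.card * 2 := by
        intro s hs
        rw [Finset.sum_congr rfl (fun ρ hρ => htoNat ρ (by rintro rfl; exact hs hρ)),
          Finset.sum_const, nsmul_eq_mul]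
      rw [Subsingleton.elim (fun (a b : G) => Classical.propDecidable (a = b))
        (inferInstanceAs (DecidableEq G))]
      rw [h9 _ (Finset.notMem_erase 1 _), Finset.card_erase_of_mem (Finset.mem_univ _),
        Finset.card_univ]
      norm_num [show Fintype.card G = 4 by simp [G]]
    have ha : ∀ ρ : G, ρ ≠ 1 → artinChar (Stmt16Aux.phi ι) ρ = -2 := by
      intro ρ hρ
      rw [artinChar, if_neg hρ, htoNat ρ hρ]
    have hχsum : ∑ g : G, χ g = 0 := by
      obtain ⟨h, hh⟩ : ∃ g : G, χ g ≠ 1 := by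
        by_contra hall
        push_neg at hall
        exact hχ (MonoidHom.ext fun g => by rw [hall g]; rfl)
      have key : χ h * ∑ g : G, χ g = ∑ g : G, χ g := by
        rw [Finset.mul_sum,
          Finset.sum_congr rfl (fun g _ => (map_mul χ h g).symm)]
        exact Fintype.sum_equiv (Equiv.mulLeft h) _ _ (fun g => by simp)
      have hz : (χ h - 1) * ∑ g : G, χ g = 0 := by
        rw [sub_mul, one_mul, key, sub_self]
      rcases mul_eq_zero.mp hz with h1 | h2
      · exact absurd (by linear_combination h1) hh
      · exact h2
    have hconj : ∑ g : G, (starRingEnd ℂ) (χ g) = 0 := by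
      have := congrArg (starRingEnd ℂ) hχsum
      rw [map_sum] at this
      simpa using this
    have herase : ∑ g ∈ Finset.univ.erase (1 : G), (starRingEnd ℂ) (χ g) = -1 := by
      have h7 : ∑ g ∈ Finset.univ.erase (1 : G), (starRingEnd ℂ) (χ g) + (starRingEnd ℂ) (χ 1)
          = ∑ g : G, (starRingEnd ℂ) (χ g) := Finset.sum_erase_add _ _ (Finset.mem_univ 1)
      rw [hconj, map_one χ, map_one] at h7
      linear_combination h7
    rw [innerCF]
    have hsplit : ∑ g : G, (starRingEnd ℂ) (χ g) * artinChar (Stmt16Aux.phi ι) g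
        = ∑ g ∈ Finset.univ.erase (1 : G),
            (starRingEnd ℂ) (χ g) * artinChar (Stmt16Aux.phi ι) g
          + (starRingEnd ℂ) (χ 1) * artinChar (Stmt16Aux.phi ι) 1 :=
      (Finset.sum_erase_add _ _ (Finset.mem_univ 1)).symm
    rw [hsplit, map_one χ, map_one, ha1, one_mul,
      Finset.sum_congr rfl (fun g hg => by rw [ha g (Finset.ne_of_mem_erase hg)]),
      ← Finset.sum_mul, herase]
    have hc4 : (Fintype.card G : ℂ) = 4 := by
      norm_num [show Fintype.card G = 4 by simp [G]]
    rw [hc4]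
    norm_num
end
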